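/- arXiv:1308.3831 — 4 statements merged into one kernel-verified Lean document; each statement's English description precedes it below -/
import Mathlib

section
/- Let 0 < p < 1, q = 1−p, and let a, r be positive integers with n > 2r+1 sufficiently large so the conditioning event is possible. Then E_p[R | σ_0 = σ_1 = … = σ_{a−1} = 0, σ_a = 1] ≤ q^{−r}·(a·q^r + 1/(p·q)). -/
open Finset


/-- Number of active neighbors of vertex `i` in the ring `C_n(r)`.
For `n > 2r+1` the `2r` offsets `±1, …, ±r` give pairwise distinct neighbors. -/
def activeNbrs (n r : ℕ) (σ : ZMod n → Bool) (i : ZMod n) : ℕ :=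
  ∑ k ∈ Finset.Icc 1 r,
    ((if σ (i + (k : ZMod n)) then 1 else 0) + (if σ (i - (k : ZMod n)) then 1 else 0))

/-- One synchronous step of strict majority bootstrap percolation on `C_n(r)`:
a passive vertex (degree `2r`) becomes active iff at least `r+1 = ⌈(2r+1)/2⌉`
of its neighbors are active; active vertices stay active. -/
def ringStep (n r : ℕ) (σ : ZMod n → Bool) : ZMod n → Bool :=
  fun i => σ i || decide (r + 1 ≤ activeNbrs n r σ i)

/-- The fixed point of strict MBP on `C_n(r)`; `n` monotone steps suffice to stabilize. -/
def ringFix (n r : ℕ) (σ : ZMod n → Bool) : ZMod n → Bool :=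
  (ringStep n r)^[n] σ

/-- Probability of an event under i.i.d. Bernoulli(`p`) initial states. -/
noncomputable def pr {V : Type} [Fintype V] [DecidableEq V] (p : ℝ) (S : Set (V → Bool)) : ℝ :=
  ∑ σ : V → Bool, S.indicator (fun τ => ∏ v, (if τ v then p else 1 - p)) σ

/-- Expectation of a random variable under i.i.d. Bernoulli(`p`) initial states. -/
noncomputable def expec {V : Type} [Fintype V] [DecidableEq V]
    (p : ℝ) (f : (V → Bool) → ℝ) : ℝ :=
  ∑ σ : V → Bool, f σ * ∏ v, (if σ v then p else 1 - p)

/-- `E_p[X_0(n,r)]`: probability that vertex `0` is active at the fixed point. -/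
noncomputable def Ex (r : ℕ) (p : ℝ) (n : ℕ) : ℝ :=
  if h : n = 0 then 0 else
    haveI : NeZero n := ⟨h⟩
    pr p {σ : ZMod n → Bool | ringFix n r σ 0 = true}

/-- `p_R(n,r,p)`: probability that strictly more than half of the `n` vertices are
active at the fixed point of strict MBP on `C_n(r)`. -/
noncomputable def pR (r : ℕ) (p : ℝ) (n : ℕ) : ℝ :=
  if h : n = 0 then 0 else
    haveI : NeZero n := ⟨h⟩
    pr p {σ : ZMod n → Bool |
      n < 2 * (Finset.univ.filter (fun i : ZMod n => ringFix n r σ i = true)).card}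

/-- There is a wall located `ℓ` vertices to the right of vertex `0`:
`σ_ℓ = 1` and `σ_{ℓ+1} = ⋯ = σ_{ℓ+(r+1)} = 0`. -/
def hasWallR (n r : ℕ) (σ : ZMod n → Bool) (ℓ : ℕ) : Prop :=
  σ ((ℓ : ℕ) : ZMod n) = true ∧ ∀ j ∈ Finset.Icc 1 (r + 1), σ (((ℓ + j : ℕ) : ZMod n)) = false

/-- There is a wall located `ℓ` vertices to the left of vertex `0`:
`σ_{−ℓ} = 1` and `σ_{−ℓ−1} = ⋯ = σ_{−ℓ−(r+1)} = 0`. -/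
def hasWallL (n r : ℕ) (σ : ZMod n → Bool) (ℓ : ℕ) : Prop :=
  σ (-((ℓ : ℕ) : ZMod n)) = true ∧
    ∀ j ∈ Finset.Icc 1 (r + 1), σ (-(((ℓ + j : ℕ) : ZMod n))) = false

open Classical in
/-- `R`: the smallest positive `ℓ` such that there is a wall located `ℓ` vertices to the
right of vertex `0`; equal to `n` if no such wall exists. -/
noncomputable def Rwall (n r : ℕ) (σ : ZMod n → Bool) : ℕ :=
  if h : ∃ ℓ, 0 < ℓ ∧ hasWallR n r σ ℓ then Nat.find h else n

open Classical in
/-- `L`: the smallest positive `ℓ` such that there is a wall located `ℓ` vertices to the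
left of vertex `0`; equal to `n` if no such wall exists. -/
noncomputable def Lwall (n r : ℕ) (σ : ZMod n → Bool) : ℕ :=
  if h : ∃ ℓ, 0 < ℓ ∧ hasWallL n r σ ℓ then Nat.find h else n


/-! ### Auxiliary development -/

section AuxWall
set_option linter.unusedSectionVars false

attribute [local instance] Classical.propDecidable

variable {n : ℕ} [NeZero n]

lemma castne {x y : ℕ} (hx : x < n) (hy : y < n) (h : x ≠ y) :
    (x : ZMod n) ≠ (y : ZMod n) := by
  intro he
  apply h
  have := congrArg ZMod.val he
  rwa [ZMod.val_cast_of_lt hx, ZMod.val_cast_of_lt hy] at this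

noncomputable def wt (n : ℕ) [NeZero n] (p : ℝ) (σ : ZMod n → Bool) : ℝ :=
  ∏ v, (if σ v then p else 1 - p)

variable {p : ℝ}

lemma wt_pos (hp : 0 < p) (hp1 : p < 1) (σ : ZMod n → Bool) : 0 < wt n p σ := by
  refine Finset.prod_pos fun v _ => ?_
  split
  · exact hp
  · linarith

lemma wt_nonneg (hp : 0 < p) (hp1 : p < 1) (σ : ZMod n → Bool) : 0 ≤ wt n p σ :=
  (wt_pos hp hp1 σ).le

lemma hasWallR_congr {r : ℕ} {σ : ZMod n → Bool} {ℓ ℓ' : ℕ} (h : ℓ ≡ ℓ' [MOD n]) :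
    hasWallR n r σ ℓ → hasWallR n r σ ℓ' := by
  rintro ⟨h1, h2⟩
  constructor
  · rwa [show ((ℓ' : ℕ) : ZMod n) = ((ℓ : ℕ) : ZMod n) from
      (ZMod.natCast_eq_natCast_iff _ _ _).2 h.symm]
  · intro j hj
    rw [show ((ℓ' + j : ℕ) : ZMod n) = ((ℓ + j : ℕ) : ZMod n) from
      (ZMod.natCast_eq_natCast_iff _ _ _).2 (h.symm.add_right j)]
    exact h2 j hj

lemma Rwall_le_n (r : ℕ) (σ : ZMod n → Bool) : Rwall n r σ ≤ n := by
  unfold Rwall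
  split
  · rename_i h
    obtain ⟨ℓ, hℓ, hw⟩ := id h
    have hmod : ℓ ≡ (ℓ - 1) % n + 1 [MOD n] := by
      calc ℓ = (ℓ - 1) + 1 := by omega
      _ ≡ (ℓ - 1) % n + 1 [MOD n] := ((Nat.mod_modEq (ℓ - 1) n).symm.add_right 1)
    have h1 : Nat.find h ≤ (ℓ - 1) % n + 1 :=
      Nat.find_le ⟨by omega, hasWallR_congr hmod hw⟩
    have hlt : (ℓ - 1) % n < n := Nat.mod_lt _ (Nat.pos_of_ne_zero (NeZero.ne n))
    omega
  · exact le_refl n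

lemma le_Rwall_iff {r ℓ : ℕ} (σ : ZMod n → Bool) (hℓ : ℓ ≤ n) :
    ℓ ≤ Rwall n r σ ↔ ∀ m, 0 < m → m < ℓ → ¬hasWallR n r σ m := by
  unfold Rwall
  split
  · rename_i h
    rw [Nat.le_find_iff]
    constructor
    · intro H m hm hmℓ hw
      exact H m hmℓ ⟨hm, hw⟩
    · rintro H m hmℓ ⟨hm, hw⟩
      exact H m hm hmℓ hw
  · rename_i h
    constructor
    · intro _ m hm _ hw
      exact h ⟨m, hm, hw⟩
    · intro _
      exact hℓ

lemma Rwall_eq {r ℓ : ℕ} {σ : ZMod n → Bool} (hl : 0 < ℓ) (hw : hasWallR n r σ ℓ)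
    (hb : ∀ m, 0 < m → m < ℓ → ¬hasWallR n r σ m) : Rwall n r σ = ℓ := by
  unfold Rwall
  have hex : ∃ m, 0 < m ∧ hasWallR n r σ m := ⟨ℓ, hl, hw⟩
  rw [dif_pos hex, Nat.find_eq_iff]
  exact ⟨⟨hl, hw⟩, fun m hm hc => hb m hc.1 hm hc.2⟩

def blk (n r ℓ : ℕ) : Finset (ZMod n) :=
  (Finset.Icc ℓ (ℓ + r + 1)).image (fun t : ℕ => (t : ZMod n))

def ov (n r ℓ : ℕ) (σ : ZMod n → Bool) : ZMod n → Bool :=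
  fun i =>
    if i = ((ℓ : ℕ) : ZMod n) then true
    else if i ∈ (Finset.Icc (ℓ + 1) (ℓ + r + 1)).image (fun t : ℕ => (t : ZMod n)) then false
    else σ i

variable {r ℓ : ℕ}

lemma ov_top (σ : ZMod n → Bool) : ov n r ℓ σ ((ℓ : ℕ) : ZMod n) = true := by
  unfold ov
  rw [if_pos rfl]

lemma ov_zeros (σ : ZMod n → Bool) (hbn : ℓ + r + 1 < n) {j : ℕ} (hj1 : 1 ≤ j)
    (hj2 : j ≤ r + 1) : ov n r ℓ σ (((ℓ + j : ℕ)) : ZMod n) = false := by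
  unfold ov
  rw [if_neg (castne (by omega) (by omega) (by omega)), if_pos]
  exact Finset.mem_image.2 ⟨ℓ + j, Finset.mem_Icc.2 ⟨by omega, by omega⟩, rfl⟩

lemma ov_off (σ : ZMod n → Bool) {i : ZMod n} (h : i ∉ blk n r ℓ) :
    ov n r ℓ σ i = σ i := by
  unfold ov
  rw [if_neg, if_neg]
  · intro hmem
    apply h
    obtain ⟨t, ht, rfl⟩ := Finset.mem_image.1 hmem
    have ht' := Finset.mem_Icc.1 ht
    exact Finset.mem_image.2 ⟨t, Finset.mem_Icc.2 (by omega), rfl⟩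
  · intro hi
    exact h (Finset.mem_image.2 ⟨ℓ, Finset.mem_Icc.2 ⟨le_refl _, by omega⟩, hi.symm ▸ rfl⟩)

lemma cast_not_mem_blk (hbn : ℓ + r + 1 < n) {x : ℕ} (hx : x < n)
    (hout : x < ℓ ∨ ℓ + r + 1 < x) : ((x : ℕ) : ZMod n) ∉ blk n r ℓ := by
  intro hmem
  obtain ⟨t, ht, heq⟩ := Finset.mem_image.1 hmem
  have ht' := Finset.mem_Icc.1 ht
  exact castne (by omega) hx (by omega) heq


def Cpred (n a : ℕ) (σ : ZMod n → Bool) : Prop :=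
  (∀ i < a, σ ((i : ℕ) : ZMod n) = false) ∧ σ ((a : ℕ) : ZMod n) = true

open Classical in
noncomputable def CFin (n a : ℕ) [NeZero n] : Finset (ZMod n → Bool) :=
  Finset.univ.filter (Cpred n a)

lemma mem_CFin {a : ℕ} {σ : ZMod n → Bool} : σ ∈ CFin n a ↔ Cpred n a σ := by
  unfold CFin
  simp [Finset.mem_filter]

lemma ov_mem_C {a : ℕ} (σ : ZMod n → Bool) (hbn : ℓ + r + 1 < n) (haℓ : a < ℓ)
    (hC : Cpred n a σ) : Cpred n a (ov n r ℓ σ) := by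
  have han : a < n := by omega
  constructor
  · intro i hi
    rw [ov_off σ (cast_not_mem_blk hbn (by omega) (Or.inl (by omega)))]
    exact hC.1 i hi
  · rw [ov_off σ (cast_not_mem_blk hbn han (Or.inl haℓ))]
    exact hC.2

lemma Rwall_ov (σ : ZMod n → Bool) (hbn : ℓ + r + 1 < n) (hl : 0 < ℓ)
    (hR : ℓ ≤ Rwall n r σ) : Rwall n r (ov n r ℓ σ) = ℓ := by
  have hnb := (le_Rwall_iff σ (by omega : ℓ ≤ n)).1 hR
  apply Rwall_eq hl
  · constructor
    · exact ov_top σ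
    · intro j hj
      have hj' := Finset.mem_Icc.1 hj
      exact ov_zeros σ hbn hj'.1 hj'.2
  · intro m hm hmℓ hw
    by_cases hcase : m + r + 1 < ℓ
    · apply hnb m hm hmℓ
      obtain ⟨hw1, hw2⟩ := hw
      constructor
      · rw [← ov_off σ (cast_not_mem_blk hbn (by omega) (Or.inl (by omega)))]
        exact hw1
      · intro j hj
        have hj' := Finset.mem_Icc.1 hj
        rw [← ov_off σ (cast_not_mem_blk hbn (by omega) (Or.inl (by omega)))]
        exact hw2 j hj
    · obtain ⟨hw1, hw2⟩ := hw
      have hj : ℓ - m ∈ Finset.Icc 1 (r + 1) := Finset.mem_Icc.2 ⟨by omega, by omega⟩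
      have h2 := hw2 (ℓ - m) hj
      rw [show m + (ℓ - m) = ℓ by omega] at h2
      rw [ov_top σ] at h2
      simp at h2

lemma prod_blk_ov (σ : ZMod n → Bool) (hbn : ℓ + r + 1 < n) :
    ∏ i ∈ blk n r ℓ, (if ov n r ℓ σ i then p else 1 - p) = p * (1 - p) ^ (r + 1) := by
  unfold blk
  rw [Finset.prod_image (by
    intro x hx y hy hxy
    have hx' := Finset.mem_Icc.1 hx
    have hy' := Finset.mem_Icc.1 hy
    by_contra hne
    exact castne (by omega) (by omega) hne hxy)]
  rw [show Finset.Icc ℓ (ℓ + r + 1) = insert ℓ (Finset.Icc (ℓ + 1) (ℓ + r + 1)) by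
    ext t
    simp [Finset.mem_Icc, Finset.mem_insert]
    omega]
  rw [Finset.prod_insert (by
    simp [Finset.mem_Icc])]
  have h2 : ∀ t ∈ Finset.Icc (ℓ + 1) (ℓ + r + 1),
      (if ov n r ℓ σ ((t : ℕ) : ZMod n) then p else 1 - p) = 1 - p := by
    intro t ht
    have ht' := Finset.mem_Icc.1 ht
    have he : ((t : ℕ) : ZMod n) = (((ℓ + (t - ℓ)) : ℕ) : ZMod n) := by
      congr 1
      omega
    rw [he, ov_zeros σ hbn (by omega) (by omega)]
    simp
  rw [Finset.prod_congr rfl h2, Finset.prod_const, Nat.card_Icc, ov_top σ,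
    show ℓ + r + 1 + 1 - (ℓ + 1) = r + 1 from by omega]
  simp

lemma wt_ov (σ : ZMod n → Bool) (hbn : ℓ + r + 1 < n) :
    wt n p (ov n r ℓ σ) * ∏ i ∈ blk n r ℓ, (if σ i then p else 1 - p)
      = (p * (1 - p) ^ (r + 1)) * wt n p σ := by
  unfold wt
  rw [← Finset.prod_mul_prod_compl (blk n r ℓ) (fun i => if ov n r ℓ σ i then p else 1 - p),
    ← Finset.prod_mul_prod_compl (blk n r ℓ) (fun i => if σ i then p else 1 - p),
    prod_blk_ov σ hbn]
  have hoff : ∏ i ∈ (blk n r ℓ)ᶜ, (if ov n r ℓ σ i then p else 1 - p)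
      = ∏ i ∈ (blk n r ℓ)ᶜ, (if σ i then p else 1 - p) :=
    Finset.prod_congr rfl fun i hi => by rw [ov_off σ (Finset.mem_compl.1 hi)]
  rw [hoff]
  ring

lemma sum_pi_bool {J : Type} [Fintype J] [DecidableEq J] :
    ∑ b : J → Bool, ∏ j, (if b j then p else 1 - p) = 1 := by
  have h := Finset.prod_univ_sum (fun _ : J => (Finset.univ : Finset Bool))
    (fun _ b => if b then p else 1 - p)
  rw [Fintype.piFinset_univ] at h
  rw [← h]
  have h1 : ∀ _j : J, ∑ b : Bool, (if b then p else 1 - p) = 1 := by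
    intro j
    simp
  rw [Finset.prod_congr rfl fun j _ => h1 j, Finset.prod_const, one_pow]

lemma step_ineq (hp : 0 < p) (hp1 : p < 1) {a : ℕ} (ha : 0 < a) (haℓ : a < ℓ)
    (hbn : ℓ + r + 1 < n) :
    p * (1 - p) ^ (r + 1) *
        ∑ σ ∈ (CFin n a).filter (fun σ => ℓ ≤ Rwall n r σ), wt n p σ
      ≤ ∑ σ ∈ (CFin n a).filter (fun σ => Rwall n r σ = ℓ), wt n p σ := by
  have hq : (0 : ℝ) < 1 - p := by linarith
  have hFnn : ∀ y : (ZMod n → Bool) × ({x // x ∈ blk n r ℓ} → Bool),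
      0 ≤ wt n p y.1 * ∏ j, (if y.2 j then p else 1 - p) := by
    intro y
    apply mul_nonneg (wt_nonneg hp hp1 _)
    exact Finset.prod_nonneg fun j _ => by split <;> linarith
  calc p * (1 - p) ^ (r + 1) * ∑ σ ∈ (CFin n a).filter (fun σ => ℓ ≤ Rwall n r σ), wt n p σ
      = ∑ σ ∈ (CFin n a).filter (fun σ => ℓ ≤ Rwall n r σ),
          wt n p (ov n r ℓ σ) * ∏ j : {x // x ∈ blk n r ℓ}, (if σ j.1 then p else 1 - p) := by
        rw [Finset.mul_sum]
        refine Finset.sum_congr rfl fun σ hσ => ?_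
        rw [Finset.prod_coe_sort (blk n r ℓ) (fun i => if σ i then p else 1 - p),
          wt_ov σ hbn]
    _ = ∑ y ∈ ((CFin n a).filter (fun σ => ℓ ≤ Rwall n r σ)).image
          (fun σ => (ov n r ℓ σ, fun j : {x // x ∈ blk n r ℓ} => σ j.1)),
          wt n p y.1 * ∏ j, (if y.2 j then p else 1 - p) := by
        rw [Finset.sum_image]
        intro σ1 _ σ2 _ h
        rw [Prod.mk.injEq] at h
        obtain ⟨h1, h2⟩ := h
        funext i
        by_cases hi : i ∈ blk n r ℓ
        · exact congrFun h2 ⟨i, hi⟩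
        · rw [← ov_off σ1 hi, ← ov_off σ2 hi, h1]
    _ ≤ ∑ y ∈ ((CFin n a).filter (fun σ => Rwall n r σ = ℓ)) ×ˢ
          (Finset.univ : Finset ({x // x ∈ blk n r ℓ} → Bool)),
          wt n p y.1 * ∏ j, (if y.2 j then p else 1 - p) := by
        apply Finset.sum_le_sum_of_subset_of_nonneg
        · intro y hy
          obtain ⟨σ, hσ, rfl⟩ := Finset.mem_image.1 hy
          obtain ⟨hσC, hσR⟩ := Finset.mem_filter.1 hσ
          rw [Finset.mem_product]
          refine ⟨Finset.mem_filter.2 ⟨?_, ?_⟩, Finset.mem_univ _⟩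
          · exact mem_CFin.2 (ov_mem_C σ hbn haℓ (mem_CFin.1 hσC))
          · exact Rwall_ov σ hbn (by omega) hσR
        · intro y _ _
          exact hFnn y
    _ = (∑ τ ∈ (CFin n a).filter (fun σ => Rwall n r σ = ℓ), wt n p τ) *
          ∑ b : {x // x ∈ blk n r ℓ} → Bool, ∏ j, (if b j then p else 1 - p) := by
        rw [Finset.sum_product, Finset.sum_mul]
        exact Finset.sum_congr rfl fun τ _ => by rw [Finset.mul_sum]
    _ = ∑ τ ∈ (CFin n a).filter (fun σ => Rwall n r σ = ℓ), wt n p τ := by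
        rw [sum_pi_bool, mul_one]


open Classical in
noncomputable def Sl (n r a : ℕ) [NeZero n] (p : ℝ) (ℓ : ℕ) : ℝ :=
  ∑ σ ∈ (CFin n a).filter (fun σ => ℓ ≤ Rwall n r σ), wt n p σ

open Classical in
noncomputable def Tl (n r a : ℕ) [NeZero n] (p : ℝ) (ℓ : ℕ) : ℝ :=
  ∑ σ ∈ (CFin n a).filter (fun σ => Rwall n r σ = ℓ), wt n p σ

lemma Sl_eq (n r a : ℕ) [NeZero n] (p : ℝ) (ℓ : ℕ) :
    Sl n r a p ℓ = ∑ σ ∈ CFin n a, if ℓ ≤ Rwall n r σ then wt n p σ else 0 := by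
  unfold Sl
  exact Finset.sum_filter _ _

lemma Tl_eq (n r a : ℕ) [NeZero n] (p : ℝ) (ℓ : ℕ) :
    Tl n r a p ℓ = ∑ σ ∈ CFin n a, if Rwall n r σ = ℓ then wt n p σ else 0 := by
  unfold Tl
  exact Finset.sum_filter _ _

lemma Sl_nonneg {a : ℕ} (hp : 0 < p) (hp1 : p < 1) (ℓ : ℕ) : 0 ≤ Sl n r a p ℓ :=
  Finset.sum_nonneg fun σ _ => wt_nonneg hp hp1 σ

lemma Sl_mono {a ℓ ℓ' : ℕ} (hp : 0 < p) (hp1 : p < 1) (h : ℓ ≤ ℓ') :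
    Sl n r a p ℓ' ≤ Sl n r a p ℓ := by
  unfold Sl
  apply Finset.sum_le_sum_of_subset_of_nonneg
  · intro σ hσ
    rw [Finset.mem_filter] at hσ ⊢
    exact ⟨hσ.1, le_trans h hσ.2⟩
  · intro σ _ _
    exact wt_nonneg hp hp1 σ

lemma step_ineq' (hp : 0 < p) (hp1 : p < 1) {a : ℕ} (ha : 0 < a) (haℓ : a < ℓ)
    (hbn : ℓ + r + 1 < n) :
    p * (1 - p) ^ (r + 1) * Sl n r a p ℓ ≤ Tl n r a p ℓ := by
  unfold Sl Tl
  exact step_ineq hp hp1 ha haℓ hbn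

lemma fac_le_one (hp : 0 < p) (hp1 : p < 1) (r : ℕ) :
    ((r : ℝ) + 2) * (p * (1 - p) ^ (r + 1)) ≤ 1 := by
  have hq : (0:ℝ) < 1 - p := by linarith
  have hb : 1 + ((r : ℝ) + 1) * (p / (1 - p)) ≤ (1 + p / (1 - p)) ^ (r + 1) := by
    have h := one_add_mul_le_pow (a := p / (1 - p)) (le_trans (by norm_num) (div_nonneg hp.le hq.le)) (r + 1)
    push_cast at h
    linarith
  have hc : (1 + p / (1 - p)) * (1 - p) = 1 := by field_simp; ring
  have hd : (1 + p / (1 - p)) ^ (r + 1) * (1 - p) ^ (r + 1) = 1 := by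
    rw [← mul_pow, hc, one_pow]
  have he : p ≤ p / (1 - p) := by
    rw [le_div_iff₀ hq]
    nlinarith
  have hkey : ((r:ℝ) + 2) * p ≤ 1 + ((r:ℝ) + 1) * (p / (1 - p)) := by
    have hmul := mul_le_mul_of_nonneg_left he (show (0:ℝ) ≤ (r:ℝ) + 1 by positivity)
    nlinarith
  calc ((r : ℝ) + 2) * (p * (1 - p) ^ (r + 1))
      = (((r:ℝ) + 2) * p) * (1 - p) ^ (r + 1) := by ring
  _ ≤ (1 + ((r:ℝ) + 1) * (p / (1 - p))) * (1 - p) ^ (r + 1) :=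
      mul_le_mul_of_nonneg_right hkey (by positivity)
  _ ≤ (1 + p / (1 - p)) ^ (r + 1) * (1 - p) ^ (r + 1) :=
      mul_le_mul_of_nonneg_right hb (by positivity)
  _ = 1 := hd


lemma main_bound {n : ℕ} [NeZero n] (p : ℝ) (hp : 0 < p) (hp1 : p < 1) (a r : ℕ)
    (ha : 0 < a) (hr : 0 < r) (hn : 2 * r + 1 < n) (han : a < n) :
    expec p (Set.indicator
        {σ : ZMod n → Bool |
          (∀ i < a, σ ((i : ℕ) : ZMod n) = false) ∧ σ ((a : ℕ) : ZMod n) = true}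
        (fun σ => (Rwall n r σ : ℝ))) /
      pr p {σ : ZMod n → Bool |
          (∀ i < a, σ ((i : ℕ) : ZMod n) = false) ∧ σ ((a : ℕ) : ZMod n) = true}
      ≤ (1 - p)⁻¹ ^ r * (a * (1 - p) ^ r + 1 / (p * (1 - p))) := by
  classical
  have hq : (0:ℝ) < 1 - p := by linarith
  have hs : (0:ℝ) < p * (1 - p) ^ (r + 1) := by positivity
  have hprC : pr p {σ : ZMod n → Bool |
        (∀ i < a, σ ((i : ℕ) : ZMod n) = false) ∧ σ ((a : ℕ) : ZMod n) = true}
      = ∑ σ ∈ CFin n a, wt n p σ := by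
    unfold pr CFin
    rw [Finset.sum_filter]
    refine Finset.sum_congr rfl fun σ _ => ?_
    by_cases h : (∀ i < a, σ ((i : ℕ) : ZMod n) = false) ∧ σ ((a : ℕ) : ZMod n) = true
    · simp [Set.indicator_apply, Set.mem_setOf_eq, h, Cpred, wt]
    · simp [Set.indicator_apply, Set.mem_setOf_eq, h, Cpred, wt]
  have hE : expec p (Set.indicator
        {σ : ZMod n → Bool |
          (∀ i < a, σ ((i : ℕ) : ZMod n) = false) ∧ σ ((a : ℕ) : ZMod n) = true}
        (fun σ => (Rwall n r σ : ℝ)))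
      = ∑ σ ∈ CFin n a, (Rwall n r σ : ℝ) * wt n p σ := by
    unfold expec CFin
    rw [Finset.sum_filter]
    refine Finset.sum_congr rfl fun σ _ => ?_
    by_cases h : (∀ i < a, σ ((i : ℕ) : ZMod n) = false) ∧ σ ((a : ℕ) : ZMod n) = true
    · simp [Set.indicator_apply, Set.mem_setOf_eq, h, Cpred, wt]
    · simp [Set.indicator_apply, Set.mem_setOf_eq, h, Cpred, wt]
  rw [hE, hprC]
  set P := ∑ σ ∈ CFin n a, wt n p σ with hPdef
  have hP0 : 0 < P := by
    have hmem : (fun i : ZMod n => decide (i = ((a : ℕ) : ZMod n))) ∈ CFin n a := by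
      refine mem_CFin.2 ⟨?_, ?_⟩
      · intro i hi
        simp only [decide_eq_false_iff_not]
        exact castne (by omega) (by omega) (by omega)
      · simp
    calc (0:ℝ) < wt n p (fun i : ZMod n => decide (i = ((a : ℕ) : ZMod n))) :=
          wt_pos hp hp1 _
    _ ≤ P := Finset.single_le_sum (fun σ _ => wt_nonneg hp hp1 σ) hmem
  rw [div_le_iff₀ hP0]
  have hlayer : ∑ σ ∈ CFin n a, (Rwall n r σ : ℝ) * wt n p σ
      ≤ (a : ℝ) * P + ∑ ℓ ∈ Finset.Icc (a + 1) n, Sl n r a p ℓ := by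
    have h1 : ∀ σ ∈ CFin n a, (Rwall n r σ : ℝ) * wt n p σ ≤
        ((a : ℝ) + ∑ ℓ ∈ Finset.Icc (a + 1) n, if ℓ ≤ Rwall n r σ then (1:ℝ) else 0)
          * wt n p σ := by
      intro σ _
      apply mul_le_mul_of_nonneg_right _ (wt_nonneg hp hp1 σ)
      have hRn := Rwall_le_n r σ
      have h2 : ∑ ℓ ∈ Finset.Icc (a + 1) n, (if ℓ ≤ Rwall n r σ then (1:ℝ) else 0)
          = (((Finset.Icc (a+1) n).filter (fun ℓ => ℓ ≤ Rwall n r σ)).card : ℝ) :=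
        Finset.sum_boole _ _
      have h3 : (Finset.Icc (a+1) n).filter (fun ℓ => ℓ ≤ Rwall n r σ)
          = Finset.Icc (a+1) (Rwall n r σ) := by
        ext m
        simp only [Finset.mem_filter, Finset.mem_Icc]
        omega
      rw [h2, h3, Nat.card_Icc]
      have h4 : Rwall n r σ ≤ a + (Rwall n r σ + 1 - (a + 1)) := by omega
      calc (Rwall n r σ : ℝ) ≤ ((a + (Rwall n r σ + 1 - (a + 1)) : ℕ) : ℝ) := by
            exact_mod_cast h4
      _ = (a : ℝ) + ((Rwall n r σ + 1 - (a + 1) : ℕ) : ℝ) := by push_cast; ring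
    calc ∑ σ ∈ CFin n a, (Rwall n r σ : ℝ) * wt n p σ
        ≤ ∑ σ ∈ CFin n a, ((a : ℝ) + ∑ ℓ ∈ Finset.Icc (a + 1) n,
            if ℓ ≤ Rwall n r σ then (1:ℝ) else 0) * wt n p σ := Finset.sum_le_sum h1
    _ = (a : ℝ) * P + ∑ ℓ ∈ Finset.Icc (a + 1) n, Sl n r a p ℓ := by
        have h5 : ∀ σ ∈ CFin n a, ((a : ℝ) + ∑ ℓ ∈ Finset.Icc (a + 1) n,
            if ℓ ≤ Rwall n r σ then (1:ℝ) else 0) * wt n p σ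
            = (a : ℝ) * wt n p σ + ∑ ℓ ∈ Finset.Icc (a + 1) n,
              (if ℓ ≤ Rwall n r σ then wt n p σ else 0) := by
          intro σ _
          rw [add_mul, Finset.sum_mul]
          congr 1
          refine Finset.sum_congr rfl fun ℓ _ => ?_
          split <;> simp
        rw [Finset.sum_congr rfl h5, Finset.sum_add_distrib, ← Finset.mul_sum,
          Finset.sum_comm]
        congr 1
        refine Finset.sum_congr rfl fun ℓ _ => ?_
        exact (Sl_eq n r a p ℓ).symm
  have hmain : p * (1 - p) ^ (r + 1) * ∑ ℓ ∈ Finset.Icc (a + 1) n, Sl n r a p ℓ ≤ P := by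
    set ℓ₀ := max (a + 1) (n - r - 1) with hℓ₀def
    have hℓ₀1 : n - r - 1 ≤ ℓ₀ := le_max_right _ _
    have hℓ₀2 : a + 1 ≤ ℓ₀ := le_max_left _ _
    have hsplit : ∑ ℓ ∈ Finset.Icc (a + 1) n, Sl n r a p ℓ
        = ∑ ℓ ∈ Finset.Icc (a + 1) (n - r - 2), Sl n r a p ℓ
          + ∑ ℓ ∈ Finset.Icc ℓ₀ n, Sl n r a p ℓ := by
      rw [← Finset.sum_filter_add_sum_filter_not (Finset.Icc (a + 1) n)
        (fun ℓ => ℓ ≤ n - r - 2) (Sl n r a p)]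
      congr 1
      · congr 1
        ext m
        simp only [Finset.mem_filter, Finset.mem_Icc]
        omega
      · congr 1
        ext m
        simp only [Finset.mem_filter, Finset.mem_Icc, hℓ₀def]
        omega
    have hpart1 : p * (1 - p) ^ (r + 1) * ∑ ℓ ∈ Finset.Icc (a + 1) (n - r - 2), Sl n r a p ℓ
        ≤ ∑ ℓ ∈ Finset.Icc (a + 1) (n - r - 2), Tl n r a p ℓ := by
      rw [Finset.mul_sum]
      apply Finset.sum_le_sum
      intro ℓ hℓ
      have hℓ' := Finset.mem_Icc.1 hℓ
      exact step_ineq' hp hp1 ha (by omega) (by omega)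
    have hpart2 : ∑ ℓ ∈ Finset.Icc ℓ₀ n, Sl n r a p ℓ ≤ ((r : ℝ) + 2) * Sl n r a p ℓ₀ := by
      have hcard : ((Finset.Icc ℓ₀ n).card : ℝ) ≤ (r : ℝ) + 2 := by
        rw [Nat.card_Icc]
        have hcc : n + 1 - ℓ₀ ≤ r + 2 := by omega
        exact_mod_cast hcc
      calc ∑ ℓ ∈ Finset.Icc ℓ₀ n, Sl n r a p ℓ
          ≤ (Finset.Icc ℓ₀ n).card • Sl n r a p ℓ₀ :=
            Finset.sum_le_card_nsmul _ _ _ (fun ℓ hℓ =>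
              Sl_mono hp hp1 (Finset.mem_Icc.1 hℓ).1)
      _ ≤ ((r:ℝ) + 2) * Sl n r a p ℓ₀ := by
          rw [nsmul_eq_mul]
          exact mul_le_mul_of_nonneg_right hcard (Sl_nonneg hp hp1 ℓ₀)
    have hdisj : ∑ ℓ ∈ Finset.Icc (a + 1) (n - r - 2), Tl n r a p ℓ + Sl n r a p ℓ₀ ≤ P := by
      have e1 : ∑ ℓ ∈ Finset.Icc (a + 1) (n - r - 2), Tl n r a p ℓ
          = ∑ σ ∈ CFin n a,
              (if Rwall n r σ ∈ Finset.Icc (a+1) (n-r-2) then wt n p σ else 0) := by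
        rw [Finset.sum_congr rfl (fun ℓ _ => Tl_eq n r a p ℓ), Finset.sum_comm]
        exact Finset.sum_congr rfl fun σ _ =>
          Finset.sum_ite_eq (Finset.Icc (a+1) (n-r-2)) (Rwall n r σ) (fun _ => wt n p σ)
      rw [e1, Sl_eq, ← Finset.sum_add_distrib]
      calc ∑ σ ∈ CFin n a,
            ((if Rwall n r σ ∈ Finset.Icc (a+1) (n-r-2) then wt n p σ else 0)
              + (if ℓ₀ ≤ Rwall n r σ then wt n p σ else 0))
          ≤ ∑ σ ∈ CFin n a, wt n p σ := by
            apply Finset.sum_le_sum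
            intro σ _
            have hw := wt_nonneg hp hp1 σ
            by_cases h1 : Rwall n r σ ∈ Finset.Icc (a+1) (n-r-2)
            · have h1' := Finset.mem_Icc.1 h1
              rw [if_pos h1, if_neg (by omega)]
              simp
            · rw [if_neg h1]
              split
              · simp [hw]
              · simp [hw]
      _ = P := hPdef.symm
    have hc2 : p * (1 - p) ^ (r + 1) * ∑ ℓ ∈ Finset.Icc ℓ₀ n, Sl n r a p ℓ
        ≤ ((r : ℝ) + 2) * (p * (1 - p) ^ (r + 1)) * Sl n r a p ℓ₀ := by
      calc p * (1-p)^(r+1) * ∑ ℓ ∈ Finset.Icc ℓ₀ n, Sl n r a p ℓ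
          ≤ p * (1-p)^(r+1) * (((r:ℝ)+2) * Sl n r a p ℓ₀) :=
            mul_le_mul_of_nonneg_left hpart2 hs.le
      _ = ((r:ℝ)+2) * (p*(1-p)^(r+1)) * Sl n r a p ℓ₀ := by ring
    have hc3 : ((r:ℝ)+2) * (p*(1-p)^(r+1)) * Sl n r a p ℓ₀ ≤ Sl n r a p ℓ₀ := by
      calc ((r:ℝ)+2) * (p*(1-p)^(r+1)) * Sl n r a p ℓ₀ ≤ 1 * Sl n r a p ℓ₀ :=
        mul_le_mul_of_nonneg_right (fac_le_one hp hp1 r) (Sl_nonneg hp hp1 ℓ₀)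
      _ = Sl n r a p ℓ₀ := one_mul _
    have hexp : p * (1-p)^(r+1) * (∑ ℓ ∈ Finset.Icc (a+1) n, Sl n r a p ℓ)
        = p * (1-p)^(r+1) * (∑ ℓ ∈ Finset.Icc (a+1) (n-r-2), Sl n r a p ℓ)
          + p * (1-p)^(r+1) * (∑ ℓ ∈ Finset.Icc ℓ₀ n, Sl n r a p ℓ) := by
      rw [hsplit]
      ring
    linarith [hpart1, hc2, hc3, hdisj]
  have hSsum : ∑ ℓ ∈ Finset.Icc (a + 1) n, Sl n r a p ℓ ≤ (p * (1 - p) ^ (r + 1))⁻¹ * P := by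
    calc ∑ ℓ ∈ Finset.Icc (a + 1) n, Sl n r a p ℓ
        = (p * (1 - p) ^ (r + 1))⁻¹ * (p * (1 - p) ^ (r + 1)
            * ∑ ℓ ∈ Finset.Icc (a + 1) n, Sl n r a p ℓ) := by
          field_simp
    _ ≤ (p * (1 - p) ^ (r + 1))⁻¹ * P :=
        mul_le_mul_of_nonneg_left hmain (by positivity)
  have hRHS : (1 - p)⁻¹ ^ r * ((a:ℝ) * (1 - p) ^ r + 1 / (p * (1 - p)))
      = (a : ℝ) + (p * (1 - p) ^ (r + 1))⁻¹ := by
    have h1 : (1 - p) ≠ 0 := ne_of_gt hq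
    have h2 : p ≠ 0 := ne_of_gt hp
    rw [inv_pow]
    field_simp
    ring
  calc ∑ σ ∈ CFin n a, (Rwall n r σ : ℝ) * wt n p σ
      ≤ (a : ℝ) * P + ∑ ℓ ∈ Finset.Icc (a + 1) n, Sl n r a p ℓ := hlayer
  _ ≤ (a : ℝ) * P + (p * (1 - p) ^ (r + 1))⁻¹ * P := by linarith
  _ = ((a : ℝ) + (p * (1 - p) ^ (r + 1))⁻¹) * P := by ring
  _ = (1 - p)⁻¹ ^ r * ((a:ℝ) * (1 - p) ^ r + 1 / (p * (1 - p))) * P := by rw [hRHS]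

end AuxWall
/-- `E_p[R | σ_0 = ⋯ = σ_{a−1} = 0, σ_a = 1] ≤ q^{−r}·(a·q^r + 1/(pq))` where `q = 1−p`.
The conditional expectation is written as `E_p[R·1_C]/P_p(C)`. -/
theorem expected_wall_distance (p : ℝ) (hp : 0 < p) (hp1 : p < 1) (a r n : ℕ)
    (ha : 0 < a) (hr : 0 < r) (hn : 2 * r + 1 < n) (han : a < n) :
    haveI : NeZero n := ⟨by omega⟩
    expec p (Set.indicator
        {σ : ZMod n → Bool |
          (∀ i < a, σ ((i : ℕ) : ZMod n) = false) ∧ σ ((a : ℕ) : ZMod n) = true}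
        (fun σ => (Rwall n r σ : ℝ))) /
      pr p {σ : ZMod n → Bool |
          (∀ i < a, σ ((i : ℕ) : ZMod n) = false) ∧ σ ((a : ℕ) : ZMod n) = true}
      ≤ (1 - p)⁻¹ ^ r * (a * (1 - p) ^ r + 1 / (p * (1 - p))) := by
  haveI : NeZero n := ⟨by omega⟩
  exact main_bound p hp hp1 a r ha hr hn han
end

section
/- Let 0 < p < 1/2, q = 1−p, and let r, Δ be positive integers, with n > 2r+1. Then P_p(X_0(n,r) = 1 and L < Δ and R < Δ | σ_0 = 0) ≤ 2Δ·(4pq)^r. -/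
open Finset


section CWAux

lemma cw_seed (n r : ℕ) [NeZero n] (σ : ZMod n → Bool)
    (W C : Set (ZMod n))
    (h0 : (0 : ZMod n) ∈ W) (hσ0 : σ 0 = false)
    (hfix : (ringStep n r)^[n] σ 0 = true)
    (hnarrow : ∀ v ∈ W, σ v = false → ∀ t, (ringStep n r)^[t] σ v = true → v ∈ C)
    (hnbr : ∀ v ∈ C, ∀ k ∈ Finset.Icc 1 r,
      (v + (k : ZMod n)) ∈ W ∧ (v - (k : ZMod n)) ∈ W) :
    ∃ v ∈ C, r + 1 ≤ activeNbrs n r σ v := by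
  classical
  have hP : ∃ t, ∃ v ∈ W, σ v = false ∧ (ringStep n r)^[t] σ v = true :=
    ⟨n, 0, h0, hσ0, hfix⟩
  obtain ⟨v, hvW, hv0, hvt⟩ := Nat.find_spec hP
  have hmin : ∀ s, s < Nat.find hP → ∀ w ∈ W, σ w = false →
      (ringStep n r)^[s] σ w ≠ true := by
    intro s hs w hw hw0 hws
    exact Nat.find_min hP hs ⟨w, hw, hw0, hws⟩
  have ht0 : Nat.find hP ≠ 0 := by
    intro h
    rw [h, Function.iterate_zero_apply] at hvt
    rw [hvt] at hv0; simp at hv0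
  have hvC : v ∈ C := hnarrow v hvW hv0 _ hvt
  obtain ⟨t', ht'⟩ := Nat.exists_eq_succ_of_ne_zero ht0
  have hprev : (ringStep n r)^[t'] σ v = false := by
    cases hb : (ringStep n r)^[t'] σ v with
    | false => rfl
    | true => exact absurd hb (hmin t' (by omega) v hvW hv0)
  rw [ht', Function.iterate_succ_apply'] at hvt
  simp only [ringStep, hprev, Bool.false_or, decide_eq_true_eq] at hvt
  have key : ∀ w, w ∈ W → (ringStep n r)^[t'] σ w = true → σ w = true := by
    intro w hw hwt
    by_contra hc
    have hwf : σ w = false := by simpa using hc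
    exact hmin t' (by omega) w hw hwf hwt
  have mono : activeNbrs n r ((ringStep n r)^[t'] σ) v ≤ activeNbrs n r σ v := by
    unfold activeNbrs
    apply Finset.sum_le_sum
    intro k hk
    obtain ⟨h1, h2⟩ := hnbr v hvC k hk
    have ind : ∀ w, w ∈ W →
        (if (ringStep n r)^[t'] σ w then 1 else 0) ≤ (if σ w then 1 else 0) := by
      intro w hw
      by_cases h : (ringStep n r)^[t'] σ w = true
      · rw [if_pos h, if_pos (key w hw h)]
      · rw [if_neg h]; exact Nat.zero_le _
    exact add_le_add (ind _ h1) (ind _ h2)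
  exact ⟨v, hvC, le_trans hvt mono⟩

lemma cw_blockR (n r : ℕ) [NeZero n] (σ : ZMod n → Bool) (a : ℕ)
    (hw : hasWallR n r σ a) (t : ℕ) :
    ∀ i ∈ Finset.Icc 1 (r + 1), (ringStep n r)^[t] σ ((a + i : ℕ) : ZMod n) = false := by
  induction t with
  | zero =>
    intro i hi
    simpa using hw.2 i hi
  | succ t ih =>
    intro i hi
    simp only [Finset.mem_Icc] at hi
    rw [Function.iterate_succ_apply']
    have hv : (ringStep n r)^[t] σ ((a + i : ℕ) : ZMod n) = false :=
      ih i (Finset.mem_Icc.mpr hi)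
    simp only [ringStep, hv, Bool.false_or, decide_eq_false_iff_not, not_le]
    have hsum : activeNbrs n r ((ringStep n r)^[t] σ) ((a + i : ℕ) : ZMod n)
        ≤ ∑ k ∈ Finset.Icc 1 r,
            ((if r + 1 < k + i then 1 else 0) + (if i ≤ k then 1 else 0)) := by
      unfold activeNbrs
      apply Finset.sum_le_sum
      intro k hk
      simp only [Finset.mem_Icc] at hk
      apply add_le_add
      · by_cases h : r + 1 < k + i
        · rw [if_pos h]; split <;> omega
        · have hcast : ((a + i : ℕ) : ZMod n) + (k : ZMod n) = ((a + (i + k) : ℕ) : ZMod n) := by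
            push_cast; ring
          rw [hcast, ih (i + k) (Finset.mem_Icc.mpr ⟨by omega, by omega⟩), if_neg h]
          simp
      · by_cases h : i ≤ k
        · rw [if_pos h]; split <;> omega
        · obtain ⟨m, hm1, hm2, hm3⟩ : ∃ m, 1 ≤ m ∧ m ≤ r + 1 ∧ i = m + k :=
            ⟨i - k, by omega, by omega, by omega⟩
          have hcast : ((a + i : ℕ) : ZMod n) - (k : ZMod n) = ((a + m : ℕ) : ZMod n) := by
            subst hm3; push_cast; ring
          rw [hcast, ih m (Finset.mem_Icc.mpr ⟨hm1, hm2⟩), if_neg h]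
          simp
    have e1 : ∑ k ∈ Finset.Icc 1 r, (if r + 1 < k + i then (1:ℕ) else 0) = i - 1 := by
      rw [← Finset.sum_filter]
      rw [show Finset.filter (fun k => r + 1 < k + i) (Finset.Icc 1 r) = Finset.Icc (r + 2 - i) r by
        ext k; simp only [Finset.mem_filter, Finset.mem_Icc]; omega]
      simp only [Finset.sum_const, smul_eq_mul, mul_one, Nat.card_Icc]
      try omega
    have e2 : ∑ k ∈ Finset.Icc 1 r, (if i ≤ k then (1:ℕ) else 0) = r + 1 - i := by
      rw [← Finset.sum_filter]
      rw [show Finset.filter (fun k => i ≤ k) (Finset.Icc 1 r) = Finset.Icc i r by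
        ext k; simp only [Finset.mem_filter, Finset.mem_Icc]; omega]
      simp only [Finset.sum_const, smul_eq_mul, mul_one, Nat.card_Icc]
      try omega
    rw [Finset.sum_add_distrib, e1, e2] at hsum
    omega

lemma cw_step_neg (n r : ℕ) [NeZero n] (σ : ZMod n → Bool) (v : ZMod n) :
    ringStep n r (fun w => σ (-w)) v = ringStep n r σ (-v) := by
  simp only [ringStep]
  have : activeNbrs n r (fun w => σ (-w)) v = activeNbrs n r σ (-v) := by
    unfold activeNbrs
    apply Finset.sum_congr rfl
    intro k _
    have e1 : -(v + (k : ZMod n)) = -v - k := by ring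
    have e2 : -(v - (k : ZMod n)) = -v + k := by ring
    simp only [e1, e2]
    exact Nat.add_comm _ _
  rw [this]

lemma cw_iter_neg (n r : ℕ) [NeZero n] (σ : ZMod n → Bool) (t : ℕ) :
    ∀ v, (ringStep n r)^[t] (fun w => σ (-w)) v = (ringStep n r)^[t] σ (-v) := by
  induction t with
  | zero => intro v; rfl
  | succ t ih =>
    intro v
    rw [Function.iterate_succ_apply', Function.iterate_succ_apply']
    rw [show ((ringStep n r)^[t] fun w => σ (-w)) = fun w => (ringStep n r)^[t] σ (-w) from
      funext ih]
    exact cw_step_neg n r ((ringStep n r)^[t] σ) v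

lemma cw_blockL (n r : ℕ) [NeZero n] (σ : ZMod n → Bool) (b : ℕ)
    (hw : hasWallL n r σ b) (t : ℕ) :
    ∀ i ∈ Finset.Icc 1 (r + 1), (ringStep n r)^[t] σ (-((b + i : ℕ) : ZMod n)) = false := by
  intro i hi
  have hw' : hasWallR n r (fun w => σ (-w)) b := ⟨hw.1, fun j hj => hw.2 j hj⟩
  have := cw_blockR n r (fun w => σ (-w)) b hw' t i hi
  rwa [cw_iter_neg] at this

lemma cw_det (n r Δ : ℕ) [NeZero n] (hr : 0 < r) (hΔ : 0 < Δ) (hn : 2 * r + 1 < n)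
    (σ : ZMod n → Bool) (h0 : σ 0 = false) (hfix : ringFix n r σ 0 = true)
    (hL : Lwall n r σ < Δ) (hR : Rwall n r σ < Δ) :
    ∃ j : ℤ, -(Δ:ℤ) < j ∧ j < Δ ∧ r + 1 ≤ activeNbrs n r σ ((j : ℤ) : ZMod n) := by
  classical
  by_cases hΔn : Δ ≤ n
  · have hRex : ∃ ℓ, 0 < ℓ ∧ hasWallR n r σ ℓ := by
      by_contra h
      have : Rwall n r σ = n := by unfold Rwall; rw [dif_neg h]
      omega
    have hLex : ∃ ℓ, 0 < ℓ ∧ hasWallL n r σ ℓ := by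
      by_contra h
      have : Lwall n r σ = n := by unfold Lwall; rw [dif_neg h]
      omega
    have hRspec : 0 < Rwall n r σ ∧ hasWallR n r σ (Rwall n r σ) := by
      unfold Rwall; rw [dif_pos hRex]; exact Nat.find_spec hRex
    have hLspec : 0 < Lwall n r σ ∧ hasWallL n r σ (Lwall n r σ) := by
      unfold Lwall; rw [dif_pos hLex]; exact Nat.find_spec hLex
    set a := Rwall n r σ with ha
    set b := Lwall n r σ with hb
    obtain ⟨ha0, haw⟩ := hRspec
    obtain ⟨hb0, hbw⟩ := hLspec
    have main := cw_seed n r σ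
      {v | ∃ j : ℤ, -((b:ℤ) + r + 1) ≤ j ∧ j ≤ (a:ℤ) + r + 1 ∧ v = (j : ZMod n)}
      {v | ∃ j : ℤ, -(b:ℤ) < j ∧ j < (a:ℤ) ∧ v = (j : ZMod n)}
      ⟨0, by omega, by omega, by simp⟩ h0 hfix ?narrow ?nbr
    case narrow =>
      rintro v ⟨j, hj1, hj2, rfl⟩ hvf t hvt
      rcases (by omega :
          (-(b:ℤ) < j ∧ j < (a:ℤ)) ∨ j = (a:ℤ) ∨ ((a:ℤ) + 1 ≤ j ∧ j ≤ (a:ℤ) + r + 1)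
          ∨ j = -(b:ℤ) ∨ (-((b:ℤ) + r + 1) ≤ j ∧ j ≤ -(b:ℤ) - 1)) with
        h | h | h | h | h
      · exact ⟨j, h.1, h.2, rfl⟩
      · exfalso
        subst h
        rw [show (((a:ℤ) : ZMod n)) = ((a : ℕ) : ZMod n) by push_cast; ring, haw.1] at hvf
        simp at hvf
      · exfalso
        obtain ⟨i, hi1, hi2, hi3⟩ : ∃ i : ℕ, 1 ≤ i ∧ i ≤ r + 1 ∧ j = (a:ℤ) + i :=
          ⟨(j - a).toNat, by omega, by omega, by omega⟩
        have hc : ((j : ℤ) : ZMod n) = ((a + i : ℕ) : ZMod n) := by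
          rw [hi3]; push_cast; ring
        rw [hc] at hvt
        rw [cw_blockR n r σ a haw t i (Finset.mem_Icc.mpr ⟨hi1, hi2⟩)] at hvt
        simp at hvt
      · exfalso
        subst h
        rw [show ((-(b:ℤ) : ℤ) : ZMod n) = -((b : ℕ) : ZMod n) by push_cast; ring, hbw.1] at hvf
        simp at hvf
      · exfalso
        obtain ⟨i, hi1, hi2, hi3⟩ : ∃ i : ℕ, 1 ≤ i ∧ i ≤ r + 1 ∧ j = -((b:ℤ) + i) :=
          ⟨(-(b:ℤ) - j).toNat, by omega, by omega, by omega⟩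
        have hc : ((j : ℤ) : ZMod n) = -((b + i : ℕ) : ZMod n) := by
          rw [hi3]; push_cast; ring
        rw [hc] at hvt
        rw [cw_blockL n r σ b hbw t i (Finset.mem_Icc.mpr ⟨hi1, hi2⟩)] at hvt
        simp at hvt
    case nbr =>
      rintro v ⟨j, hj1, hj2, rfl⟩ k hk
      simp only [Finset.mem_Icc] at hk
      constructor
      · exact ⟨j + k, by omega, by omega, by push_cast; ring⟩
      · exact ⟨j - k, by omega, by omega, by push_cast; ring⟩
    obtain ⟨v, ⟨j, hj1, hj2, rfl⟩, hv⟩ := main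
    exact ⟨j, by omega, by omega, hv⟩
  · have main := cw_seed n r σ Set.univ Set.univ trivial h0 hfix
      (fun _ _ _ _ _ => trivial) (fun _ _ _ _ => ⟨trivial, trivial⟩)
    obtain ⟨v, -, hv⟩ := main
    refine ⟨(v.val : ℤ), by have := ZMod.val_lt v; omega, by have := ZMod.val_lt v; omega, ?_⟩
    rw [show (((v.val : ℤ)) : ZMod n) = ((v.val : ℕ) : ZMod n) by push_cast; ring,
      ZMod.natCast_rightInverse v]
    exact hv


lemma cw_sum_prod_bool {V : Type} [Fintype V] [DecidableEq V] (g : V → Bool → ℝ) :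
    ∑ σ : V → Bool, ∏ v, g v (σ v) = ∏ v, (g v true + g v false) := by
  classical
  have h1 : ∏ v, (g v true + g v false) = ∏ v, ∑ b ∈ (Finset.univ : Finset Bool), g v b := by
    apply Finset.prod_congr rfl
    intro v _
    rw [Fintype.sum_bool]
  rw [h1, Finset.prod_univ_sum, Fintype.piFinset_univ]

lemma cw_pr_Ej (n r : ℕ) [NeZero n] {p : ℝ} (hp : 0 < p) (hp2 : p < 1 / 2)
    (hn : 2 * r + 1 < n) (c : ZMod n) :
    pr p {σ : ZMod n → Bool | σ 0 = false ∧ r + 1 ≤ activeNbrs n r σ c}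
      ≤ (1 - p) * (4 * p * (1 - p)) ^ r := by
  classical
  have hq : (1:ℝ)/2 < 1 - p := by linarith
  have hq0 : (0:ℝ) < 1 - p := by linarith
  have hθ : 1 ≤ (1 - p) / p := by rw [le_div_iff₀ hp]; linarith
  have hθ0 : (0:ℝ) ≤ (1 - p) / p := by positivity
  set N : Finset (ZMod n) :=
    ((Finset.Icc 1 r).image fun k : ℕ => c + (k : ZMod n)) ∪
    ((Finset.Icc 1 r).image fun k : ℕ => c - (k : ZMod n)) with hN
  have hcastinj : ∀ k ∈ Finset.Icc 1 r, ∀ k' ∈ Finset.Icc 1 r,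
      (k : ZMod n) = (k' : ZMod n) → k = k' := by
    intro k hk k' hk' h
    simp only [Finset.mem_Icc] at hk hk'
    calc k = ((k : ZMod n)).val := (ZMod.val_cast_of_lt (by omega)).symm
      _ = ((k' : ZMod n)).val := by rw [h]
      _ = k' := ZMod.val_cast_of_lt (by omega)
  have hdisj : Disjoint ((Finset.Icc 1 r).image fun k : ℕ => c + (k : ZMod n))
      ((Finset.Icc 1 r).image fun k : ℕ => c - (k : ZMod n)) := by
    rw [Finset.disjoint_left]
    rintro x hx1 hx2
    obtain ⟨k, hk, rfl⟩ := Finset.mem_image.mp hx1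
    obtain ⟨k', hk', heq⟩ := Finset.mem_image.mp hx2
    simp only [Finset.mem_Icc] at hk hk'
    have h0 : ((k + k' : ℕ) : ZMod n) = 0 := by
      push_cast
      linear_combination - heq
    have hdvd : n ∣ k + k' := by
      exact (ZMod.natCast_eq_zero_iff _ _).mp h0
    have := Nat.le_of_dvd (by omega) hdvd
    omega
  have hX : ∀ σ : ZMod n → Bool,
      activeNbrs n r σ c = ∑ v ∈ N, (if σ v then 1 else 0) := by
    intro σ
    rw [hN, Finset.sum_union hdisj,
      Finset.sum_image (fun k hk k' hk' h => hcastinj k hk k' hk' (by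
        exact add_left_cancel h)),
      Finset.sum_image (fun k hk k' hk' h => hcastinj k hk k' hk' (by
        exact sub_right_inj.mp h))]
    unfold activeNbrs
    rw [Finset.sum_add_distrib]
  set g : ZMod n → Bool → ℝ := fun v b =>
    (if v = 0 ∧ b = true then 0 else (if b = true then p else 1 - p)) *
    (if v ∈ N ∧ b = true then (1 - p) / p else 1) with hg
  have hgnn : ∀ v b, 0 ≤ g v b := by
    intro v b
    rw [hg]
    apply mul_nonneg
    · split_ifs <;> linarith
    · split_ifs <;> linarith
  have hpoint : ∀ σ : ZMod n → Bool,
      Set.indicator {σ : ZMod n → Bool | σ 0 = false ∧ r + 1 ≤ activeNbrs n r σ c}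
        (fun τ => ∏ v, (if τ v then p else 1 - p)) σ
      ≤ (p / (1 - p)) ^ (r + 1) * ∏ v, g v (σ v) := by
    intro σ
    by_cases hσ : σ ∈ {σ : ZMod n → Bool | σ 0 = false ∧ r + 1 ≤ activeNbrs n r σ c}
    · have hσ0 : σ 0 = false := hσ.1
      have hσX : r + 1 ≤ activeNbrs n r σ c := hσ.2
      rw [Set.indicator_of_mem hσ]
      have hsplit : ∏ v, g v (σ v)
          = (∏ v, (if σ v then p else 1 - p)) *
            ∏ v, (if v ∈ N ∧ σ v = true then (1 - p) / p else 1) := by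
        rw [← Finset.prod_mul_distrib]
        apply Finset.prod_congr rfl
        intro v _
        rw [hg]
        simp only
        congr 1
        by_cases hv : v = 0
        · subst hv
          simp [hσ0]
        · simp [hv]
      have hprodθ : (∏ v, (if v ∈ N ∧ σ v = true then (1 - p) / p else 1))
          = ((1 - p) / p) ^ (activeNbrs n r σ c) := by
        have e : ∀ v : ZMod n, (if v ∈ N ∧ σ v = true then (1 - p) / p else 1)
            = if v ∈ N then (((1 - p) / p) ^ (if σ v then 1 else 0)) else 1 := by
          intro v
          by_cases h1 : v ∈ N <;> by_cases h2 : σ v = true <;> simp [h1, h2]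
        simp_rw [e]
        rw [Finset.prod_ite_mem Finset.univ N
          (fun v => ((1 - p) / p) ^ (if σ v then 1 else 0)), Finset.univ_inter,
          Finset.prod_pow_eq_pow_sum, ← hX σ]
      rw [hsplit, hprodθ]
      have hf0 : (0:ℝ) ≤ ∏ v, (if σ v then p else 1 - p) := by
        apply Finset.prod_nonneg; intro v _; split <;> linarith
      have hone : 1 ≤ (p / (1 - p)) ^ (r + 1) * ((1 - p) / p) ^ (activeNbrs n r σ c) := by
        have h1 : ((1 - p) / p) ^ (r + 1) ≤ ((1 - p) / p) ^ (activeNbrs n r σ c) :=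
          pow_le_pow_right₀ hθ hσX
        have h2 : (p / (1 - p)) ^ (r + 1) * ((1 - p) / p) ^ (r + 1) = 1 := by
          rw [← mul_pow]
          rw [show p / (1 - p) * ((1 - p) / p) = 1 by field_simp]
          simp
        calc (1:ℝ) = (p / (1 - p)) ^ (r + 1) * ((1 - p) / p) ^ (r + 1) := h2.symm
          _ ≤ _ := by
              apply mul_le_mul_of_nonneg_left h1
              positivity
      calc (∏ v, if σ v then p else 1 - p)
          = (∏ v, if σ v then p else 1 - p) * 1 := by ring
        _ ≤ (∏ v, if σ v then p else 1 - p) *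
            ((p / (1 - p)) ^ (r + 1) * ((1 - p) / p) ^ (activeNbrs n r σ c)) :=
            mul_le_mul_of_nonneg_left hone hf0
        _ = (p / (1 - p)) ^ (r + 1) *
            ((∏ v, if σ v then p else 1 - p) * ((1 - p) / p) ^ (activeNbrs n r σ c)) := by
            ring
    · rw [Set.indicator_of_notMem hσ]
      apply mul_nonneg
      · positivity
      · exact Finset.prod_nonneg fun v _ => hgnn v (σ v)
  have hsum : pr p {σ : ZMod n → Bool | σ 0 = false ∧ r + 1 ≤ activeNbrs n r σ c}
      ≤ (p / (1 - p)) ^ (r + 1) * ∑ σ : ZMod n → Bool, ∏ v, g v (σ v) := by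
    unfold pr
    rw [Finset.mul_sum]
    exact Finset.sum_le_sum fun σ _ => hpoint σ
  rw [cw_sum_prod_bool g] at hsum
  have hfac : ∀ v : ZMod n, g v true + g v false
      = if v = 0 then 1 - p else (if v ∈ N then 2 * (1 - p) else 1) := by
    intro v
    rw [hg]
    by_cases hv : v = 0 <;> by_cases hvN : v ∈ N
    · simp [hv, hvN]
    · simp [hv, hvN]
    · simp only [hv, hvN, if_true, if_false]
      simp
      field_simp
      ring
    · simp only [hv, hvN, if_true, if_false]
      simp
  have hprod : (∏ v : ZMod n, (g v true + g v false)) ≤ (1 - p) * (2 * (1 - p)) ^ (2 * r) := by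
    have hNcard : N.card ≤ 2 * r := by
      have h1 := Finset.card_union_le ((Finset.Icc 1 r).image fun k : ℕ => c + (k : ZMod n))
        ((Finset.Icc 1 r).image fun k : ℕ => c - (k : ZMod n))
      have h2 := Finset.card_image_le (s := Finset.Icc 1 r) (f := fun k : ℕ => c + (k : ZMod n))
      have h3 := Finset.card_image_le (s := Finset.Icc 1 r) (f := fun k : ℕ => c - (k : ZMod n))
      rw [Nat.card_Icc] at h2 h3
      rw [hN]
      omega
    calc (∏ v : ZMod n, (g v true + g v false))
        = ∏ v : ZMod n, (if v = 0 then 1 - p else (if v ∈ N then 2 * (1 - p) else 1)) :=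
          Finset.prod_congr rfl fun v _ => hfac v
      _ = (1 - p) * ∏ v ∈ Finset.univ.erase 0,
            (if v = 0 then 1 - p else (if v ∈ N then 2 * (1 - p) else 1)) := by
          rw [← Finset.mul_prod_erase Finset.univ _ (Finset.mem_univ (0 : ZMod n))]
          rw [if_pos rfl]
      _ = (1 - p) * ∏ v ∈ Finset.univ.erase 0, (if v ∈ N then 2 * (1 - p) else 1) := by
          congr 1
          apply Finset.prod_congr rfl
          intro v hv
          rw [if_neg (Finset.ne_of_mem_erase hv)]
      _ = (1 - p) * (2 * (1 - p)) ^ ((Finset.univ.erase (0 : ZMod n) ∩ N).card) := by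
          rw [Finset.prod_ite_mem, Finset.prod_const]
      _ ≤ (1 - p) * (2 * (1 - p)) ^ (2 * r) := by
          apply mul_le_mul_of_nonneg_left _ hq0.le
          apply pow_le_pow_right₀ (by linarith)
          calc (Finset.univ.erase (0 : ZMod n) ∩ N).card
              ≤ N.card := Finset.card_le_card (Finset.inter_subset_right)
            _ ≤ 2 * r := hNcard
  have harith : ∀ q : ℝ, q ≠ 0 → (p / q) ^ (r + 1) * (q * (2 * q) ^ (2 * r))
      = p * (4 * p * q) ^ r := by
    intro q hqne
    have h24 : ((2:ℝ) * q) ^ (2 * r) = 4 ^ r * q ^ (2 * r) := by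
      rw [mul_pow, pow_mul]; norm_num
    rw [h24]
    rw [div_pow, div_mul_eq_mul_div, div_eq_iff (pow_ne_zero _ hqne)]
    ring
  have hfinal : (p / (1 - p)) ^ (r + 1) * ((1 - p) * (2 * (1 - p)) ^ (2 * r))
      = p * (4 * p * (1 - p)) ^ r := harith (1 - p) (ne_of_gt hq0)
  calc pr p {σ : ZMod n → Bool | σ 0 = false ∧ r + 1 ≤ activeNbrs n r σ c}
      ≤ (p / (1 - p)) ^ (r + 1) * ∏ v : ZMod n, (g v true + g v false) := hsum
    _ ≤ (p / (1 - p)) ^ (r + 1) * ((1 - p) * (2 * (1 - p)) ^ (2 * r)) := by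
        apply mul_le_mul_of_nonneg_left hprod
        positivity
    _ = p * (4 * p * (1 - p)) ^ r := hfinal
    _ ≤ (1 - p) * (4 * p * (1 - p)) ^ r := by
        apply mul_le_mul_of_nonneg_right (by linarith)
        positivity


lemma cw_weight_nonneg {V : Type} [Fintype V] {p : ℝ} (h0 : 0 ≤ p) (h1 : p ≤ 1)
    (τ : V → Bool) : 0 ≤ ∏ v, (if τ v then p else 1 - p) := by
  apply Finset.prod_nonneg
  intro v _
  split <;> linarith

lemma cw_pr_le_sum {V : Type} [Fintype V] [DecidableEq V] {p : ℝ} (h0 : 0 ≤ p) (h1 : p ≤ 1)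
    {ι : Type} {J : Finset ι} {S : Set (V → Bool)} {E : ι → Set (V → Bool)}
    (hS : ∀ σ ∈ S, ∃ j ∈ J, σ ∈ E j) :
    pr p S ≤ ∑ j ∈ J, pr p (E j) := by
  classical
  unfold pr
  rw [Finset.sum_comm]
  apply Finset.sum_le_sum
  intro σ _
  by_cases hσ : σ ∈ S
  · rw [Set.indicator_of_mem hσ]
    obtain ⟨j0, hj0, hj0E⟩ := hS σ hσ
    calc (∏ v, if σ v then p else 1 - p)
        = (E j0).indicator (fun τ => ∏ v, (if τ v then p else 1 - p)) σ :=
          (Set.indicator_of_mem hj0E (fun τ => ∏ v, (if τ v then p else 1 - p))).symm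
      _ ≤ ∑ j ∈ J, (E j).indicator (fun τ => ∏ v, (if τ v then p else 1 - p)) σ :=
          Finset.single_le_sum
            (fun j _ => Set.indicator_nonneg (fun τ _ => cw_weight_nonneg h0 h1 τ) σ) hj0
  · rw [Set.indicator_of_notMem hσ]
    exact Finset.sum_nonneg fun j _ =>
      Set.indicator_nonneg (fun τ _ => cw_weight_nonneg h0 h1 τ) σ

lemma cw_pr_coord {V : Type} [Fintype V] [DecidableEq V] {p : ℝ} (h0 : 0 ≤ p) (h1 : p ≤ 1)
    (v0 : V) :
    pr p {σ : V → Bool | σ v0 = false} = 1 - p := by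
  classical
  unfold pr
  have hkey := cw_sum_prod_bool (V := V)
    (fun v b => if v = v0 then (if b then 0 else 1 - p) else (if b then p else 1 - p))
  simp only at hkey
  have hpt : ∀ σ : V → Bool,
      ({σ : V → Bool | σ v0 = false}).indicator (fun τ => ∏ v, (if τ v then p else 1 - p)) σ
      = ∏ v, (if v = v0 then (if σ v then (0:ℝ) else 1 - p) else (if σ v then p else 1 - p)) := by
    intro σ
    by_cases h : σ ∈ {σ : V → Bool | σ v0 = false}
    · rw [Set.indicator_of_mem h]
      apply Finset.prod_congr rfl
      intro v _
      by_cases hv : v = v0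
      · subst hv
        have : σ v = false := h
        simp [this]
      · simp [hv]
    · rw [Set.indicator_of_notMem h]
      have hv0 : σ v0 = true := by
        have : ¬ (σ v0 = false) := h
        simpa using this
      symm
      apply Finset.prod_eq_zero (Finset.mem_univ v0)
      simp [hv0]
  rw [Finset.sum_congr rfl fun σ _ => hpt σ, hkey]
  rw [Finset.prod_eq_single v0]
  · simp
  · intro v _ hv
    simp only [if_neg hv, if_pos, if_true, if_false]
    norm_num
  · intro h
    exact absurd (Finset.mem_univ v0) h

end CWAux

/-- `P_p(X_0(n,r) = 1, L < Δ, R < Δ | σ_0 = 0) ≤ 2Δ·(4pq)^r` where `q = 1−p`.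
The conditional probability is written as `P_p(event ∩ condition)/P_p(condition)`. -/
theorem close_walls (p : ℝ) (hp : 0 < p) (hp2 : p < 1 / 2) (r Δ n : ℕ)
    (hr : 0 < r) (hΔ : 0 < Δ) (hn : 2 * r + 1 < n) :
    haveI : NeZero n := ⟨by omega⟩
    pr p {σ : ZMod n → Bool |
        ringFix n r σ 0 = true ∧ Lwall n r σ < Δ ∧ Rwall n r σ < Δ ∧ σ 0 = false} /
      pr p {σ : ZMod n → Bool | σ 0 = false}
      ≤ 2 * Δ * (4 * p * (1 - p)) ^ r := by
  haveI : NeZero n := ⟨by omega⟩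
  have hq0 : (0:ℝ) < 1 - p := by linarith
  rw [cw_pr_coord (le_of_lt hp) (by linarith) (0 : ZMod n)]
  rw [div_le_iff₀ hq0]
  calc pr p {σ : ZMod n → Bool |
        ringFix n r σ 0 = true ∧ Lwall n r σ < Δ ∧ Rwall n r σ < Δ ∧ σ 0 = false}
      ≤ ∑ j ∈ Finset.Ioo (-(Δ:ℤ)) (Δ:ℤ),
          pr p {σ : ZMod n → Bool | σ 0 = false ∧ r + 1 ≤ activeNbrs n r σ ((j : ℤ) : ZMod n)} := by
        apply cw_pr_le_sum (le_of_lt hp) (by linarith)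
        intro σ hσ
        obtain ⟨h1, h2, h3, h4⟩ := hσ
        obtain ⟨j, hj1, hj2, hj3⟩ := cw_det n r Δ hr hΔ hn σ h4 h1 h2 h3
        exact ⟨j, Finset.mem_Ioo.mpr ⟨hj1, hj2⟩, h4, hj3⟩
    _ ≤ ∑ _j ∈ Finset.Ioo (-(Δ:ℤ)) (Δ:ℤ), (1 - p) * (4 * p * (1 - p)) ^ r :=
        Finset.sum_le_sum fun j _ => cw_pr_Ej n r hp hp2 hn _
    _ = ((Finset.Ioo (-(Δ:ℤ)) (Δ:ℤ)).card : ℝ) * ((1 - p) * (4 * p * (1 - p)) ^ r) := by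
        rw [Finset.sum_const, nsmul_eq_mul]
    _ ≤ 2 * Δ * (4 * p * (1 - p)) ^ r * (1 - p) := by
        have hcard : (Finset.Ioo (-(Δ:ℤ)) (Δ:ℤ)).card ≤ 2 * Δ := by
          rw [Int.card_Ioo]
          omega
        have hnn : (0:ℝ) ≤ (1 - p) * (4 * p * (1 - p)) ^ r := by positivity
        calc ((Finset.Ioo (-(Δ:ℤ)) (Δ:ℤ)).card : ℝ) * ((1 - p) * (4 * p * (1 - p)) ^ r)
            ≤ ((2 * Δ : ℕ) : ℝ) * ((1 - p) * (4 * p * (1 - p)) ^ r) := by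
              apply mul_le_mul_of_nonneg_right _ hnn
              exact_mod_cast hcard
          _ = 2 * Δ * (4 * p * (1 - p)) ^ r * (1 - p) := by push_cast; ring
end

section
/- For every 0 < p < 1/2 with q = 1−p and every positive integer r, the probability that a Binomial(2r, p) random variable is at least r+1 satisfies P(Bin(2r,p) ≥ r+1) ≤ (4pq)^r. -/
open Finset

/-- Chernoff bound for the binomial tail: for `0 < p < 1/2` and `q = 1 − p`,
`P(Bin(2r,p) ≥ r+1) = ∑_{k=r+1}^{2r} C(2r,k)·p^k·q^{2r−k} ≤ (4pq)^r`. -/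
theorem binomial_tail_chernoff (p : ℝ) (hp : 0 < p) (hp2 : p < 1 / 2) (r : ℕ) (hr : 0 < r) :
    ∑ k ∈ Finset.Icc (r + 1) (2 * r),
        (Nat.choose (2 * r) k : ℝ) * p ^ k * (1 - p) ^ (2 * r - k)
      ≤ (4 * p * (1 - p)) ^ r := by
  have hq : (0:ℝ) < 1 - p := by linarith
  have hpq : p ≤ 1 - p := by linarith
  have key : ∀ k ∈ Finset.Icc (r + 1) (2 * r),
      (Nat.choose (2 * r) k : ℝ) * p ^ k * (1 - p) ^ (2 * r - k)
        ≤ (Nat.choose (2 * r) k : ℝ) * (p ^ r * (1 - p) ^ r) := by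
    intro k hk
    simp only [Finset.mem_Icc] at hk
    set j := k - r with hj
    have e1 : k = r + j := by omega
    have hjr : j ≤ r := by omega
    rw [mul_assoc, e1]
    have e2 : 2 * r - (r + j) = r - j := by omega
    rw [e2]
    have hpj : p ^ j ≤ (1 - p) ^ j := pow_le_pow_left₀ hp.le hpq j
    have inner : p ^ (r + j) * (1 - p) ^ (r - j) ≤ p ^ r * (1 - p) ^ r := by
      rw [pow_add]
      calc p ^ r * p ^ j * (1 - p) ^ (r - j)
          ≤ p ^ r * (1 - p) ^ j * (1 - p) ^ (r - j) := by gcongr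
        _ = p ^ r * ((1 - p) ^ j * (1 - p) ^ (r - j)) := by ring
        _ = p ^ r * (1 - p) ^ r := by rw [← pow_add, Nat.add_sub_cancel' hjr]
    exact mul_le_mul_of_nonneg_left inner (Nat.cast_nonneg _)
  have hsumchoose : (∑ k ∈ Finset.Icc (r + 1) (2 * r), Nat.choose (2 * r) k) ≤ 4 ^ r := by
    have hsub : Finset.Icc (r + 1) (2 * r) ⊆ Finset.range (2 * r + 1) := by
      intro k hk
      simp only [Finset.mem_Icc] at hk
      simp only [Finset.mem_range]
      omega
    calc (∑ k ∈ Finset.Icc (r + 1) (2 * r), Nat.choose (2 * r) k)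
        ≤ ∑ k ∈ Finset.range (2 * r + 1), Nat.choose (2 * r) k :=
          Finset.sum_le_sum_of_subset hsub
      _ = 2 ^ (2 * r) := Nat.sum_range_choose (2 * r)
      _ = 4 ^ r := by rw [pow_mul]; norm_num
  calc ∑ k ∈ Finset.Icc (r + 1) (2 * r),
        (Nat.choose (2 * r) k : ℝ) * p ^ k * (1 - p) ^ (2 * r - k)
      ≤ ∑ k ∈ Finset.Icc (r + 1) (2 * r),
        (Nat.choose (2 * r) k : ℝ) * (p ^ r * (1 - p) ^ r) := Finset.sum_le_sum key
    _ = ((∑ k ∈ Finset.Icc (r + 1) (2 * r), Nat.choose (2 * r) k : ℕ) : ℝ)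
          * (p ^ r * (1 - p) ^ r) := by
        rw [← Finset.sum_mul]; push_cast; ring
    _ ≤ ((4:ℝ) ^ r) * (p ^ r * (1 - p) ^ r) := by
        have h4 : ((∑ k ∈ Finset.Icc (r + 1) (2 * r), Nat.choose (2 * r) k : ℕ) : ℝ)
            ≤ (4:ℝ) ^ r := by
          exact_mod_cast hsumchoose
        have hpos : (0:ℝ) ≤ p ^ r * (1 - p) ^ r := by positivity
        exact mul_le_mul_of_nonneg_right h4 hpos
    _ = (4 * p * (1 - p)) ^ r := by rw [mul_pow, mul_pow]; ring
end

section
/- For all 0 < p < 1/4 there exists a positive integer r_0 = r_0(p) such that for all r ≥ r_0 and all n > 2r+1, E_p[X_0(n,r)] < 1/4. -/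
open Finset


noncomputable def indP (P : Prop) : ℝ := by classical exact if P then 1 else 0

lemma indP_nonneg (P : Prop) : 0 ≤ indP P := by
  unfold indP; split <;> norm_num

lemma indP_of {P : Prop} (h : P) : indP P = 1 := by unfold indP; simp [h]

lemma indP_of_not {P : Prop} (h : ¬ P) : indP P = 0 := by unfold indP; simp [h]

section Prob
variable {V : Type} [Fintype V] [DecidableEq V] (p : ℝ)

lemma weight_nonneg (hp0 : 0 ≤ p) (hp1 : p ≤ 1) (σ : V → Bool) :
    0 ≤ ∏ v, (if σ v then p else 1 - p) := by
  apply Finset.prod_nonneg; intro v _; split <;> linarith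

lemma expec_mono (hp0 : 0 ≤ p) (hp1 : p ≤ 1) {f g : (V → Bool) → ℝ}
    (h : ∀ σ, f σ ≤ g σ) : expec p f ≤ expec p g := by
  apply Finset.sum_le_sum; intro σ _
  exact mul_le_mul_of_nonneg_right (h σ) (weight_nonneg p hp0 hp1 σ)

lemma expec_sum {ι : Type*} (s : Finset ι) (F : ι → (V → Bool) → ℝ) :
    expec p (fun σ => ∑ i ∈ s, F i σ) = ∑ i ∈ s, expec p (F i) := by
  unfold expec
  rw [Finset.sum_comm]
  · congr 1; ext σ; rw [Finset.sum_mul]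

lemma expec_const_mul (c : ℝ) (f : (V → Bool) → ℝ) :
    expec p (fun σ => c * f σ) = c * expec p f := by
  unfold expec; rw [Finset.mul_sum]; congr 1; ext σ; ring

lemma star (A : Finset V) (g : V → Bool → ℝ) :
    expec p (fun σ => ∏ v ∈ A, g v (σ v)) =
      ∏ v ∈ A, (g v true * p + g v false * (1 - p)) := by
  unfold expec
  have key : ∀ σ : V → Bool,
      (∏ v ∈ A, g v (σ v)) * ∏ v, (if σ v then p else 1 - p)
        = ∏ v : V, ((if v ∈ A then g v (σ v) else 1) * (if σ v then p else 1 - p)) := by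
    intro σ
    rw [Finset.prod_mul_distrib]
    congr 1
    rw [Finset.prod_ite_mem, Finset.univ_inter]
  simp_rw [key]
  have := Finset.prod_univ_sum (fun _ : V => (Finset.univ : Finset Bool))
    (fun v b => (if v ∈ A then g v b else 1) * (if b then p else 1 - p))
  rw [Fintype.piFinset_univ] at this
  rw [← this]
  have : ∀ v : V, (∑ b : Bool, (if v ∈ A then g v b else 1) * (if b then p else 1 - p))
      = if v ∈ A then g v true * p + g v false * (1 - p) else 1 := by
    intro v; rw [Fintype.sum_bool]; split <;> simp <;> ring
  simp_rw [this]
  rw [Finset.prod_ite_mem, Finset.univ_inter]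

lemma expec_one : expec (V := V) p (fun _ => (1:ℝ)) = 1 := by
  have := star (V := V) p ∅ (fun _ _ => (1:ℝ))
  simpa using this

lemma expec_const (c : ℝ) : expec (V := V) p (fun _ => c) = c := by
  have := expec_const_mul (V := V) p c (fun _ => (1:ℝ))
  simpa [expec_one] using this

lemma pr_eq_expec (S : Set (V → Bool)) :
    pr p S = expec p (fun σ => indP (σ ∈ S)) := by
  classical
  unfold pr expec indP
  congr 1; ext σ
  rw [Set.indicator_apply]
  by_cases h : σ ∈ S <;> simp [h]


lemma expec_add (f g : (V → Bool) → ℝ) :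
    expec p (fun σ => f σ + g σ) = expec p f + expec p g := by
  unfold expec
  rw [← Finset.sum_add_distrib]
  congr 1; ext σ; ring

end Prob

section Prob
variable {V : Type} [Fintype V] [DecidableEq V] (p : ℝ)

lemma blocks_bound (hp0 : 0 ≤ p) (hp1 : p ≤ 1) (T r : ℕ) (B : ℕ → Finset ℕ)
    (hdisj : ∀ t ∈ Finset.range T, ∀ t' ∈ Finset.range T, t ≠ t' → Disjoint (B t) (B t'))
    (hcard : ∀ t ∈ Finset.range T, (B t).card = r + 1)
    (c : ℕ → V)
    (hinj : ∀ t ∈ Finset.range T, ∀ t' ∈ Finset.range T,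
      ∀ j ∈ B t, ∀ j' ∈ B t', c j = c j' → j = j') :
    expec p (fun σ => indP (∀ t ∈ Finset.range T, ∃ j ∈ B t, σ (c j) = true))
      ≤ (1 - (1-p)^(r+1))^T := by
  classical
  set Z : ℕ → (V → Bool) → ℝ := fun t σ => ∏ j ∈ B t, (if σ (c j) then 0 else 1) with hZ
  have hZ01 : ∀ t σ, 0 ≤ Z t σ ∧ Z t σ ≤ 1 := by
    intro t σ
    constructor
    · apply Finset.prod_nonneg; intro j _; split <;> norm_num
    · apply Finset.prod_le_one <;> intro j _ <;> split <;> norm_num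
  have h1 : ∀ σ, indP (∀ t ∈ Finset.range T, ∃ j ∈ B t, σ (c j) = true)
      ≤ ∏ t ∈ Finset.range T, (1 - Z t σ) := by
    intro σ
    by_cases H : ∀ t ∈ Finset.range T, ∃ j ∈ B t, σ (c j) = true
    · rw [indP_of H]
      rw [Finset.prod_eq_one]
      intro t ht
      obtain ⟨j, hj, hσ⟩ := H t ht
      have : Z t σ = 0 := Finset.prod_eq_zero hj (by simp [hσ])
      rw [this]; ring
    · rw [indP_of_not H]
      apply Finset.prod_nonneg
      intro t _; linarith [(hZ01 t σ).2]
  refine le_trans (expec_mono p hp0 hp1 h1) ?_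
  have h3 : ∀ σ, ∏ t ∈ Finset.range T, (1 - Z t σ)
      = ∑ A ∈ (Finset.range T).powerset,
          (∏ t ∈ A, (- Z t σ)) * ∏ t ∈ Finset.range T \ A, (1:ℝ) := by
    intro σ
    rw [← Finset.prod_add]
    congr 1; ext t; ring
  simp_rw [h3]
  rw [expec_sum]
  have h5 : ∀ A ∈ (Finset.range T).powerset,
      expec (V := V) p (fun σ => (∏ t ∈ A, (- Z t σ)) * ∏ t ∈ Finset.range T \ A, (1:ℝ))
        = (∏ t ∈ A, (-(1-p)^(r+1))) * ∏ t ∈ Finset.range T \ A, (1:ℝ) := by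
    intro A hA
    have hAsub := Finset.mem_powerset.1 hA
    simp only [Finset.prod_const_one, mul_one]
    have hneg : ∀ σ, (∏ t ∈ A, (- Z t σ)) = (-1)^A.card * ∏ t ∈ A, Z t σ := by
      intro σ; rw [← Finset.prod_const (-1 : ℝ), ← Finset.prod_mul_distrib]
      congr 1; ext t; ring
    simp_rw [hneg]
    rw [expec_const_mul]
    have hU : ∀ σ, (∏ t ∈ A, Z t σ)
        = ∏ v ∈ (A.biUnion B).image c, (if σ v then (0:ℝ) else 1) := by
      intro σ
      rw [Finset.prod_image]
      · rw [Finset.prod_biUnion]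
        intro t ht t' ht' hne
        exact hdisj t (hAsub ht) t' (hAsub ht') hne
      · intro j hj j' hj' hcc
        obtain ⟨t, ht, hjB⟩ := Finset.mem_biUnion.1 hj
        obtain ⟨t', ht', hjB'⟩ := Finset.mem_biUnion.1 hj'
        exact hinj t (hAsub ht) t' (hAsub ht') j hjB j' hjB' hcc
    simp_rw [hU]
    rw [star p ((A.biUnion B).image c) (fun _ b => if b then (0:ℝ) else 1)]
    have hcardU : ((A.biUnion B).image c).card = A.card * (r+1) := by
      rw [Finset.card_image_of_injOn]
      · rw [Finset.card_biUnion]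
        · rw [Finset.sum_congr rfl (fun t ht => hcard t (hAsub ht))]
          simp [Finset.sum_const, mul_comm]
        · intro t ht t' ht' hne
          exact hdisj t (hAsub ht) t' (hAsub ht') hne
      · intro j hj j' hj' hcc
        obtain ⟨t, ht, hjB⟩ := Finset.mem_biUnion.1 hj
        obtain ⟨t', ht', hjB'⟩ := Finset.mem_biUnion.1 hj'
        exact hinj t (hAsub ht) t' (hAsub ht') j hjB j' hjB' hcc
    norm_num
    rw [hcardU, pow_mul', ← neg_pow]
  rw [Finset.sum_congr rfl h5, ← Finset.prod_add]
  apply le_of_eq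
  rw [Finset.prod_const, Finset.card_range]
  congr 1; ring
end Prob

lemma cast_inj_of_lt {n : ℕ} [NeZero n] {a b : ℕ} (ha : a < n) (hb : b < n)
    (h : (a : ZMod n) = (b : ZMod n)) : a = b := by
  have := congrArg ZMod.val h
  rwa [ZMod.val_cast_of_lt ha, ZMod.val_cast_of_lt hb] at this

lemma window_bound (p : ℝ) (hp0 : 0 < p) (hp2 : p ≤ 1/2) (n r : ℕ) [NeZero n]
    (hn : 2*r+1 < n) (hr : 1 ≤ r) (c : ZMod n) :
    expec p (fun σ => indP (r+1 ≤ activeNbrs n r σ c))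
      ≤ 4^r * p^(r+1) * (1-p)^(r-1) := by
  classical
  have hp1 : 1 - p > 0 := by linarith
  set L : ℝ := (1-p)/p with hL
  have hL1 : 1 ≤ L := by rw [hL, le_div_iff₀ hp0]; linarith
  have hL0 : 0 < L := by linarith
  set f : ℕ → ZMod n := fun k => c + (k : ZMod n) - (r : ZMod n) with hf
  have hfinj : ∀ a ≤ 2*r, ∀ b ≤ 2*r, f a = f b → a = b := by
    intro a ha b hb h
    have : (a : ZMod n) = (b : ZMod n) := by
      have := h
      simp only [hf] at this
      have h2 : c + (a : ZMod n) = c + (b : ZMod n) := by linear_combination this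
      exact add_left_cancel h2
    exact cast_inj_of_lt (by omega) (by omega) this
  have hplus : ∀ k : ℕ, c + (k : ZMod n) = f (r + k) := by
    intro k; simp only [hf]; push_cast; ring
  have hminus : ∀ k : ℕ, k ≤ r → c - (k : ZMod n) = f (r - k) := by
    intro k hk; simp only [hf]; rw [Nat.cast_sub hk]; ring
  have hA : ∀ σ : ZMod n → Bool, activeNbrs n r σ c
      = ∑ k ∈ Finset.Icc 1 r,
        ((if σ (f (r+k)) then 1 else 0) + (if σ (f (r-k)) then 1 else 0)) := by
    intro σ
    unfold activeNbrs
    apply Finset.sum_congr rfl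
    intro k hk
    rw [← hplus k, ← hminus k (Finset.mem_Icc.1 hk).2]
  set g : Bool → ℝ := fun b => if b then L else 1 with hg
  set G : (ZMod n → Bool) → ℝ :=
    fun σ => ∏ k ∈ Finset.Icc 1 r, (g (σ (f (r+k))) * g (σ (f (r-k)))) with hG
  have hGpow : ∀ σ, G σ = L ^ (activeNbrs n r σ c) := by
    intro σ
    rw [hA σ, ← Finset.prod_pow_eq_pow_sum]
    apply Finset.prod_congr rfl
    intro k _
    rcases h1 : σ (f (r+k)) <;> rcases h2 : σ (f (r-k)) <;>
      simp [hg, h1, h2, pow_add, pow_two]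
  have hG0 : ∀ σ, 0 ≤ G σ := by
    intro σ; apply Finset.prod_nonneg; intro k _
    apply mul_nonneg <;> · simp only [hg]; split <;> linarith
  have hpoint : ∀ σ, indP (r+1 ≤ activeNbrs n r σ c) ≤ (L^(r+1))⁻¹ * G σ := by
    intro σ
    by_cases h : r+1 ≤ activeNbrs n r σ c
    · rw [indP_of h, hGpow σ]
      rw [inv_mul_eq_div, le_div_iff₀ (by positivity), one_mul]
      exact pow_le_pow_right₀ hL1 h
    · rw [indP_of_not h]
      positivity
  refine le_trans (expec_mono p (le_of_lt hp0) (by linarith) hpoint) ?_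
  rw [expec_const_mul]
  -- reindex G to a product over coordinates
  set N1 : Finset (ZMod n) := (Finset.Icc 1 r).image (fun k => f (r+k)) with hN1
  set N2 : Finset (ZMod n) := (Finset.Icc 1 r).image (fun k => f (r-k)) with hN2
  have hinj1 : Set.InjOn (fun k => f (r+k)) (Finset.Icc 1 r) := by
    intro a ha b hb h
    have ha' := Finset.mem_Icc.1 ha; have hb' := Finset.mem_Icc.1 hb
    have := hfinj (r+a) (by omega) (r+b) (by omega) h
    omega
  have hinj2 : Set.InjOn (fun k => f (r-k)) (Finset.Icc 1 r) := by
    intro a ha b hb h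
    have ha' := Finset.mem_Icc.1 ha; have hb' := Finset.mem_Icc.1 hb
    have := hfinj (r-a) (by omega) (r-b) (by omega) h
    omega
  have hdisj : Disjoint N1 N2 := by
    rw [Finset.disjoint_left]
    intro v hv1 hv2
    obtain ⟨a, ha, rfl⟩ := Finset.mem_image.1 hv1
    obtain ⟨b, hb, hba⟩ := Finset.mem_image.1 hv2
    have ha' := Finset.mem_Icc.1 ha; have hb' := Finset.mem_Icc.1 hb
    have := hfinj (r-b) (by omega) (r+a) (by omega) hba
    omega
  have hGsplit : ∀ σ, G σ = ∏ v ∈ N1 ∪ N2, g (σ v) := by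
    intro σ
    show (∏ k ∈ Finset.Icc 1 r, g (σ (f (r+k))) * g (σ (f (r-k)))) = _
    rw [Finset.prod_mul_distrib, Finset.prod_union hdisj, hN1, hN2,
      Finset.prod_image hinj1, Finset.prod_image hinj2]
  rw [show G = fun σ => ∏ v ∈ N1 ∪ N2, g (σ v) from funext hGsplit]
  rw [star p (N1 ∪ N2) (fun _ b => g b)]
  have hcard : (N1 ∪ N2).card = 2*r := by
    rw [Finset.card_union_of_disjoint hdisj, hN1, hN2,
      Finset.card_image_of_injOn hinj1, Finset.card_image_of_injOn hinj2, Nat.card_Icc]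
    omega
  have hgval : (g true * p + g false * (1-p)) = 2*(1-p) := by
    simp only [hg, if_true, if_false, Bool.false_eq_true, ↓reduceIte]
    rw [hL]
    field_simp
    ring
  rw [Finset.prod_const, hcard, hgval]
  -- final computation
  have h2r : (2*(1-p))^(2*r) = 4^r * ((1-p)^(r+1) * (1-p)^(r-1)) := by
    rw [mul_pow, ← pow_add]
    congr 1
    · rw [pow_mul]; norm_num
    · congr 1; omega
  apply le_of_eq
  rw [h2r, hL, div_pow, inv_div]
  have hne : ((1:ℝ)-p)^(r+1) ≠ 0 := by positivity
  field_simp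

lemma sum_indic (a r : ℕ) (h : a ≤ r) :
    ∑ k ∈ Finset.Icc 1 r, (if a < k then (1:ℕ) else 0) = r - a := by
  have hf : (Finset.Icc 1 r).filter (fun k => a < k) = Finset.Icc (a+1) r := by
    ext x; simp [Finset.mem_Icc, Finset.mem_filter]; omega
  rw [Finset.sum_ite, Finset.sum_const, Finset.sum_const_zero, hf]
  simp [Nat.card_Icc]

lemma det (n r : ℕ) [NeZero n] (hn : 2*r+1 < n) (σ : ZMod n → Bool) (s : ZMod n) (m : ℕ)
    (hm1 : 2*r+2 ≤ m) (hmn : m ≤ n)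
    (h1 : ∀ j, j ≤ r → σ (s + (j : ZMod n)) = false)
    (h2 : ∀ j, m ≤ j + r + 1 → j < m → σ (s + (j : ZMod n)) = false)
    (hM : ∀ j : ℕ, r+1 ≤ j → j + r + 2 ≤ m → activeNbrs n r σ (s + (j : ZMod n)) ≤ r) :
    ∀ t : ℕ, ∀ j < m, (ringStep n r)^[t] σ (s + (j : ZMod n)) = σ (s + (j : ZMod n)) := by
  intro t
  induction t with
  | zero => intro j _; rfl
  | succ t ih =>
    intro j hj
    rw [Function.iterate_succ_apply']
    set τ := (ringStep n r)^[t] σ with hτ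
    have hbound : activeNbrs n r τ (s + (j : ZMod n)) ≤ r := by
      rcases (show j ≤ r ∨ (r+1 ≤ j ∧ j+r+2 ≤ m) ∨ (m ≤ j+r+1) from by omega) with hc | hc | hc
      · -- left run
        calc activeNbrs n r τ (s + (j : ZMod n))
            ≤ ∑ k ∈ Finset.Icc 1 r,
              ((if r - j < k then 1 else 0) + (if j < k then 1 else 0)) := by
              apply Finset.sum_le_sum
              intro k hk
              obtain ⟨hk1, hk2⟩ := Finset.mem_Icc.1 hk
              gcongr
              · by_cases hd : r - j < k
                · simp only [if_pos hd]; split <;> omega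
                · have he : τ (s + (j:ZMod n) + (k:ZMod n)) = false := by
                    rw [show s + (j:ZMod n) + (k:ZMod n) = s + ((j+k : ℕ) : ZMod n) by
                      push_cast; ring]
                    rw [ih (j+k) (by omega)]
                    exact h1 (j+k) (by omega)
                  simp [he]
              · by_cases hd : j < k
                · simp only [if_pos hd]; split <;> omega
                · have he : τ (s + (j:ZMod n) - (k:ZMod n)) = false := by
                    rw [show s + (j:ZMod n) - (k:ZMod n) = s + ((j-k : ℕ) : ZMod n) by
                      rw [Nat.cast_sub (by omega)]; ring]
                    rw [ih (j-k) (by omega)]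
                    exact h1 (j-k) (by omega)
                  simp [he]
          _ = (r - (r - j)) + (r - j) := by
              rw [Finset.sum_add_distrib, sum_indic (r-j) r (by omega),
                sum_indic j r (by omega)]
          _ ≤ r := by omega
      · -- middle
        have heq : activeNbrs n r τ (s + (j : ZMod n)) = activeNbrs n r σ (s + (j : ZMod n)) := by
          unfold activeNbrs
          apply Finset.sum_congr rfl
          intro k hk
          obtain ⟨hk1, hk2⟩ := Finset.mem_Icc.1 hk
          congr 1
          · rw [show s + (j:ZMod n) + (k:ZMod n) = s + ((j+k : ℕ) : ZMod n) by push_cast; ring]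
            rw [ih (j+k) (by omega)]
          · rw [show s + (j:ZMod n) - (k:ZMod n) = s + ((j-k : ℕ) : ZMod n) by
              rw [Nat.cast_sub (by omega)]; ring]
            rw [ih (j-k) (by omega)]
        rw [heq]
        exact hM j hc.1 hc.2
      · -- right run
        calc activeNbrs n r τ (s + (j : ZMod n))
            ≤ ∑ k ∈ Finset.Icc 1 r,
              ((if m - 1 - j < k then 1 else 0) + (if j + r + 1 - m < k then 1 else 0)) := by
              apply Finset.sum_le_sum
              intro k hk
              obtain ⟨hk1, hk2⟩ := Finset.mem_Icc.1 hk
              gcongr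
              · by_cases hd : m - 1 - j < k
                · simp only [if_pos hd]; split <;> omega
                · have he : τ (s + (j:ZMod n) + (k:ZMod n)) = false := by
                    rw [show s + (j:ZMod n) + (k:ZMod n) = s + ((j+k : ℕ) : ZMod n) by
                      push_cast; ring]
                    rw [ih (j+k) (by omega)]
                    exact h2 (j+k) (by omega) (by omega)
                  simp [he]
              · by_cases hd : j + r + 1 - m < k
                · simp only [if_pos hd]; split <;> omega
                · have he : τ (s + (j:ZMod n) - (k:ZMod n)) = false := by
                    rw [show s + (j:ZMod n) - (k:ZMod n) = s + ((j-k : ℕ) : ZMod n) by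
                      rw [Nat.cast_sub (by omega)]; ring]
                    rw [ih (j-k) (by omega)]
                    exact h2 (j-k) (by omega) (by omega)
                  simp [he]
          _ = (r - (m - 1 - j)) + (r - (j + r + 1 - m)) := by
              rw [Finset.sum_add_distrib, sum_indic (m-1-j) r (by omega),
                sum_indic (j+r+1-m) r (by omega)]
          _ ≤ r := by omega
    show ringStep n r τ (s + (j : ZMod n)) = σ (s + (j : ZMod n))
    unfold ringStep
    rw [ih j hj]
    rcases hσj : σ (s + (j : ZMod n)) with _ | _
    · simp only [hσj, Bool.false_or, decide_eq_false_iff_not, not_le]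
      omega
    · simp [hσj]

lemma fixed_of_no_window (n r : ℕ) [NeZero n] (σ : ZMod n → Bool)
    (h : ∀ i, activeNbrs n r σ i ≤ r) : ∀ i, ringFix n r σ i = σ i := by
  have hstep : ringStep n r σ = σ := by
    funext i
    unfold ringStep
    have : ¬ (r + 1 ≤ activeNbrs n r σ i) := by have := h i; omega
    simp [this]
  intro i
  unfold ringFix
  rw [Function.iterate_fixed hstep]

lemma glue (n r : ℕ) [NeZero n] (hn : 2*r+1 < n) (σ : ZMod n → Bool) (D : ℕ)
    (e : ℕ → ZMod n) (he : ∀ j, e j = (j : ZMod n) - ((D + r : ℕ) : ZMod n))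
    (hbig : 2*D + 2*r + 1 ≤ n)
    (a b : ℕ) (ha : a + r + 1 ≤ D)
    (hb1 : D + r + 1 ≤ b) (hb2 : b + r ≤ 2*D + 2*r)
    (hla : ∀ k, k ≤ r → σ (e (a+k)) = false)
    (hlb : ∀ k, k ≤ r → σ (e (b+k)) = false)
    (hwin : ∀ j, r ≤ j → j ≤ 2*D + r → activeNbrs n r σ (e j) ≤ r)
    (h0 : σ 0 = false) : ringFix n r σ 0 = false := by
  have hea : ∀ j : ℕ, e a + (j : ZMod n) = e (a + j) := by
    intro j; rw [he, he]; push_cast; ring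
  set m : ℕ := b + r + 1 - a with hm
  have hdet := det n r hn σ (e a) m (by omega) (by omega)
    (by intro j hj; rw [hea j]; exact hla j hj)
    (by
      intro j hj1 hj2
      rw [hea j]
      have : a + j = b + (a + j - b) := by omega
      rw [this]
      exact hlb (a + j - b) (by omega))
    (by
      intro j hj1 hj2
      rw [hea j]
      exact hwin (a + j) (by omega) (by omega))
  have h0e : (0 : ZMod n) = e a + ((D + r - a : ℕ) : ZMod n) := by
    rw [hea, he]
    have : a + (D + r - a) = D + r := by omega
    rw [this]
    ring
  unfold ringFix
  rw [h0e]
  rw [hdet n (D + r - a) (by omega)]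
  rw [← h0e]
  exact h0

lemma expec_single {V : Type} [Fintype V] [DecidableEq V] (p : ℝ) (v : V) :
    expec p (fun σ => indP (σ v = true)) = p := by
  have hs := star (V := V) p ({v} : Finset V) (fun (_ : V) (b : Bool) => if b then (1:ℝ) else 0)
  simp only [Finset.prod_singleton] at hs
  simp only [if_true, if_false] at hs
  norm_num at hs
  rw [← hs]
  congr 1
  funext σ
  rcases hb : σ v <;> simp [hb, indP_of, indP_of_not]

theorem key (p : ℝ) (hp0 : 0 < p) (hp4 : p < 1/4) (r T n : ℕ)
    (hr : 1 ≤ r) (hT : 1 ≤ T) (hn : 2*r+1 < n) [NeZero n] :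
    pr p {σ : ZMod n → Bool | ringFix n r σ 0 = true}
      ≤ p + 2*(1-(1-p)^(r+1))^T
        + (2*(T*(r+1))+2*r+1) * (4^r * p^(r+1) * (1-p)^(r-1)) := by
  classical
  have hp1 : p ≤ 1 := by linarith
  have hp0' : (0:ℝ) ≤ p := le_of_lt hp0
  have hq01 : 0 ≤ (1-p)^(r+1) ∧ (1-p)^(r+1) ≤ 1 := by
    constructor
    · apply pow_nonneg; linarith
    · exact pow_le_one₀ (by linarith) (by linarith)
  have hWpos : 0 ≤ 4^r * p^(r+1) * (1-p)^(r-1) :=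
    mul_nonneg (mul_nonneg (by positivity) (by positivity)) (pow_nonneg (by linarith) _)
  have hblockpos : (0:ℝ) ≤ (1-(1-p)^(r+1))^T := by
    apply pow_nonneg; linarith [hq01.2]
  rw [pr_eq_expec]
  set D := T*(r+1) with hD
  by_cases hreg : n ≤ 2*D + 2*r
  · -- regime 1 : small n
    have hpoint : ∀ σ : ZMod n → Bool,
        indP ((ringFix n r σ 0 = true))
          ≤ indP (σ 0 = true)
            + ∑ j ∈ Finset.range n, indP (r+1 ≤ activeNbrs n r σ ((j : ZMod n) + (r : ZMod n))) := by
      intro σ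
      by_cases hfix : ringFix n r σ 0 = true
      · by_cases h0 : σ 0 = true
        · rw [indP_of h0]
          have : (0:ℝ) ≤ ∑ j ∈ Finset.range n, indP (r+1 ≤ activeNbrs n r σ ((j : ZMod n) + (r : ZMod n))) :=
            Finset.sum_nonneg (fun j _ => indP_nonneg _)
          calc indP (ringFix n r σ 0 = true) ≤ 1 := by
                rw [indP_of hfix]
            _ ≤ _ := by linarith
        · by_cases hex : ∃ i, r+1 ≤ activeNbrs n r σ i
          · obtain ⟨i, hi⟩ := hex
            set j := (i - (r : ZMod n)).val with hj
            have hjn : j ∈ Finset.range n := by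
              rw [Finset.mem_range]; exact ZMod.val_lt _
            have hji : (j : ZMod n) + (r : ZMod n) = i := by
              rw [hj, ZMod.natCast_val, ZMod.cast_id]
              ring
            calc indP (ringFix n r σ 0 = true) = 1 := indP_of hfix
              _ ≤ indP (r+1 ≤ activeNbrs n r σ ((j : ZMod n) + (r : ZMod n))) := by
                  rw [hji, indP_of hi]
              _ ≤ ∑ j' ∈ Finset.range n, indP (r+1 ≤ activeNbrs n r σ ((j' : ZMod n) + (r : ZMod n))) := by
                  exact Finset.single_le_sum
                    (f := fun j' : ℕ => indP (r + 1 ≤ activeNbrs n r σ ((j' : ZMod n) + (r : ZMod n))))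
                    (fun j' _ => indP_nonneg _) hjn
              _ ≤ _ := by linarith [indP_nonneg (σ 0 = true)]
          · exfalso
            push_neg at hex
            have := fixed_of_no_window n r σ (fun i => by have := hex i; omega) 0
            rw [hfix] at this
            rw [← this] at h0
            exact h0 rfl
      · rw [indP_of_not hfix]
        have h1 := indP_nonneg (σ 0 = true)
        have h2 : (0:ℝ) ≤ ∑ j ∈ Finset.range n, indP (r+1 ≤ activeNbrs n r σ ((j : ZMod n) + (r : ZMod n))) :=
          Finset.sum_nonneg (fun j _ => indP_nonneg _)
        linarith
    refine le_trans (expec_mono p hp0' hp1 hpoint) ?_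
    rw [expec_add, expec_sum, expec_single]
    have hsum : ∑ j ∈ Finset.range n,
        expec p (fun σ => indP (r+1 ≤ activeNbrs n r σ ((j : ZMod n) + (r : ZMod n))))
          ≤ (n : ℝ) * (4^r * p^(r+1) * (1-p)^(r-1)) := by
      calc ∑ j ∈ Finset.range n, expec p (fun σ => indP (r+1 ≤ activeNbrs n r σ ((j : ZMod n) + (r : ZMod n))))
          ≤ ∑ j ∈ Finset.range n, (4^r * p^(r+1) * (1-p)^(r-1)) := by
            apply Finset.sum_le_sum
            intro j _
            exact window_bound p hp0 (by linarith) n r hn hr _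
        _ = (n : ℝ) * (4^r * p^(r+1) * (1-p)^(r-1)) := by
            rw [Finset.sum_const, Finset.card_range]; ring
    have hncast : (n : ℝ) ≤ 2*(T*(r+1))+2*r := by
      rw [hD] at hreg
      have : (n:ℝ) ≤ ((2*(T*(r+1))+2*r : ℕ) : ℝ) := by exact_mod_cast hreg
      push_cast at this
      linarith
    have : (n : ℝ) * (4^r * p^(r+1) * (1-p)^(r-1))
        ≤ (2*(T*(r+1))+2*r+1) * (4^r * p^(r+1) * (1-p)^(r-1)) := by
      apply mul_le_mul_of_nonneg_right _ hWpos
      linarith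
    linarith
  · -- regime 2 : large n
    push_neg at hreg
    have hbig : 2*D + 2*r + 1 ≤ n := hreg
    set e : ℕ → ZMod n := fun j => (j : ZMod n) - ((D + r : ℕ) : ZMod n) with he
    set Bleft : ℕ → Finset ℕ := fun u => Finset.Icc (u*(r+1)) (u*(r+1)+r) with hBleft
    set Bright : ℕ → Finset ℕ := fun t => Finset.Icc (D+r+1+t*(r+1)) (D+r+1+t*(r+1)+r) with hBright
    have hmulmono : ∀ u u' : ℕ, u < u' → u*(r+1) + (r+1) ≤ u'*(r+1) := by
      intro u u' h
      have : (u+1)*(r+1) ≤ u'*(r+1) := Nat.mul_le_mul_right _ (by omega)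
      calc u*(r+1) + (r+1) = (u+1)*(r+1) := by ring
        _ ≤ u'*(r+1) := this
    have hblocksub : ∀ u ∈ Finset.range T, ∀ j ∈ Bleft u, j ≤ 2*D+2*r := by
      intro u hu j hj
      rw [hBleft] at hj
      have := Finset.mem_Icc.1 hj
      have h2 : u*(r+1) + (r+1) ≤ T*(r+1) :=
        hmulmono u T (Finset.mem_range.1 hu)
      rw [hD]
      omega
    have hblocksubR : ∀ t ∈ Finset.range T, ∀ j ∈ Bright t, j ≤ 2*D+2*r := by
      intro t ht j hj
      rw [hBright] at hj
      have := Finset.mem_Icc.1 hj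
      have h2 : t*(r+1) + (r+1) ≤ T*(r+1) :=
        hmulmono t T (Finset.mem_range.1 ht)
      rw [hD] at *
      omega
    have heinj : ∀ j j' : ℕ, j ≤ 2*D+2*r → j' ≤ 2*D+2*r → e j = e j' → j = j' := by
      intro j j' hjb hjb' hee
      rw [he] at hee
      simp only at hee
      have : (j : ZMod n) = (j' : ZMod n) := by linear_combination hee
      exact cast_inj_of_lt (by omega) (by omega) this
    have hpoint : ∀ σ : ZMod n → Bool,
        indP (ringFix n r σ 0 = true)
          ≤ indP (σ 0 = true)
            + indP (∀ u ∈ Finset.range T, ∃ j ∈ Bleft u, σ (e j) = true)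
            + indP (∀ t ∈ Finset.range T, ∃ j ∈ Bright t, σ (e j) = true)
            + ∑ j ∈ Finset.Icc r (2*D+r), indP (r+1 ≤ activeNbrs n r σ (e j)) := by
      intro σ
      have hsum0 : (0:ℝ) ≤ ∑ j ∈ Finset.Icc r (2*D+r), indP (r+1 ≤ activeNbrs n r σ (e j)) :=
        Finset.sum_nonneg fun _ _ => indP_nonneg _
      have i1 := indP_nonneg (σ 0 = true)
      have i2 := indP_nonneg (∀ u ∈ Finset.range T, ∃ j ∈ Bleft u, σ (e j) = true)
      have i3 := indP_nonneg (∀ t ∈ Finset.range T, ∃ j ∈ Bright t, σ (e j) = true)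
      by_cases hfix : ringFix n r σ 0 = true
      swap
      · rw [indP_of_not hfix]; linarith
      rw [indP_of hfix]
      by_cases h0 : σ 0 = true
      · rw [indP_of h0]; linarith
      by_cases hbl : ∀ u ∈ Finset.range T, ∃ j ∈ Bleft u, σ (e j) = true
      · rw [indP_of hbl]; linarith
      by_cases hbr : ∀ t ∈ Finset.range T, ∃ j ∈ Bright t, σ (e j) = true
      · rw [indP_of hbr]; linarith
      by_cases hw : ∃ j ∈ Finset.Icc r (2*D+r), r+1 ≤ activeNbrs n r σ (e j)
      · obtain ⟨j, hjmem, hjw⟩ := hw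
        have hle : (1:ℝ) ≤ ∑ j' ∈ Finset.Icc r (2*D+r), indP (r+1 ≤ activeNbrs n r σ (e j')) := by
          calc (1:ℝ) = indP (r+1 ≤ activeNbrs n r σ (e j)) := (indP_of hjw).symm
            _ ≤ _ := Finset.single_le_sum
                (f := fun j' : ℕ => indP (r+1 ≤ activeNbrs n r σ (e j')))
                (fun _ _ => indP_nonneg _) hjmem
        linarith
      · exfalso
        push_neg at hbl hbr hw
        obtain ⟨u, hu, hublock⟩ := hbl
        obtain ⟨t, ht, htblock⟩ := hbr
        have hmulu : u*(r+1) + (r+1) ≤ T*(r+1) := hmulmono u T (Finset.mem_range.1 hu)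
        have hmult : t*(r+1) + (r+1) ≤ T*(r+1) := hmulmono t T (Finset.mem_range.1 ht)
        have h0f : σ 0 = false := by
          rcases hv : σ 0 with _ | _
          · rfl
          · exact absurd hv h0
        have hglue := glue n r hn σ D e (fun j => rfl) hbig (u*(r+1)) (D+r+1+t*(r+1))
          (by rw [hD]; linarith [hmulu])
          (by linarith [Nat.zero_le (t*(r+1))])
          (by rw [hD]; linarith [hmult])
          (by
            intro k hk
            have hmem : u*(r+1)+k ∈ Bleft u := by
              rw [hBleft, Finset.mem_Icc]
              exact ⟨Nat.le_add_right _ _, Nat.add_le_add_left hk _⟩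
            have := hublock _ hmem
            rcases hv : σ (e (u*(r+1)+k)) with _ | _
            · rfl
            · exact absurd hv this)
          (by
            intro k hk
            have hmem : D+r+1+t*(r+1)+k ∈ Bright t := by
              rw [hBright, Finset.mem_Icc]
              exact ⟨Nat.le_add_right _ _, Nat.add_le_add_left hk _⟩
            have := htblock _ hmem
            rcases hv : σ (e (D+r+1+t*(r+1)+k)) with _ | _
            · rfl
            · exact absurd hv this)
          (by
            intro j hj1 hj2
            have := hw j (Finset.mem_Icc.2 ⟨hj1, hj2⟩)
            omega)
          h0f
        rw [hglue] at hfix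
        exact absurd hfix (by simp)
    refine le_trans (expec_mono p hp0' hp1 hpoint) ?_
    rw [expec_add, expec_add, expec_add, expec_single, expec_sum]
    have hdisjL : ∀ u ∈ Finset.range T, ∀ u' ∈ Finset.range T, u ≠ u' →
        Disjoint (Bleft u) (Bleft u') := by
      intro u _ u' _ hne
      rw [Finset.disjoint_left]
      intro x hx hx'
      rw [hBleft, Finset.mem_Icc] at hx hx'
      rcases Nat.lt_or_ge u u' with h | h
      · have := hmulmono u u' h; linarith [hx.2, hx'.1]
      · have hlt : u' < u := by omega
        have := hmulmono u' u hlt; linarith [hx'.2, hx.1]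
    have hdisjR : ∀ t ∈ Finset.range T, ∀ t' ∈ Finset.range T, t ≠ t' →
        Disjoint (Bright t) (Bright t') := by
      intro t _ t' _ hne
      rw [Finset.disjoint_left]
      intro x hx hx'
      rw [hBright, Finset.mem_Icc] at hx hx'
      rcases Nat.lt_or_ge t t' with h | h
      · have := hmulmono t t' h; linarith [hx.2, hx'.1]
      · have hlt : t' < t := by omega
        have := hmulmono t' t hlt; linarith [hx'.2, hx.1]
    have hcardL : ∀ u ∈ Finset.range T, (Bleft u).card = r + 1 := by
      intro u _
      rw [hBleft, Nat.card_Icc, add_assoc, Nat.add_sub_cancel_left]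
    have hcardR : ∀ t ∈ Finset.range T, (Bright t).card = r + 1 := by
      intro t _
      rw [hBright, Nat.card_Icc, add_assoc, Nat.add_sub_cancel_left]
    have hinjL : ∀ u ∈ Finset.range T, ∀ u' ∈ Finset.range T,
        ∀ j ∈ Bleft u, ∀ j' ∈ Bleft u', e j = e j' → j = j' := by
      intro u hu u' hu' j hj j' hj' hee
      exact heinj j j' (hblocksub u hu j hj) (hblocksub u' hu' j' hj') hee
    have hinjR : ∀ t ∈ Finset.range T, ∀ t' ∈ Finset.range T,
        ∀ j ∈ Bright t, ∀ j' ∈ Bright t', e j = e j' → j = j' := by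
      intro t ht t' ht' j hj j' hj' hee
      exact heinj j j' (hblocksubR t ht j hj) (hblocksubR t' ht' j' hj') hee
    have hBL := blocks_bound p hp0' hp1 T r Bleft hdisjL hcardL e hinjL
    have hBR := blocks_bound p hp0' hp1 T r Bright hdisjR hcardR e hinjR
    have hWsum : ∑ j ∈ Finset.Icc r (2*D+r),
        expec p (fun σ => indP (r+1 ≤ activeNbrs n r σ (e j)))
          ≤ ((2*D+1 : ℕ) : ℝ) * (4^r * p^(r+1) * (1-p)^(r-1)) := by
      calc ∑ j ∈ Finset.Icc r (2*D+r), expec p (fun σ => indP (r+1 ≤ activeNbrs n r σ (e j)))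
          ≤ ∑ j ∈ Finset.Icc r (2*D+r), (4^r * p^(r+1) * (1-p)^(r-1)) := by
            apply Finset.sum_le_sum
            intro j _
            exact window_bound p hp0 (by linarith) n r hn hr _
        _ = ((2*D+1 : ℕ) : ℝ) * (4^r * p^(r+1) * (1-p)^(r-1)) := by
            rw [Finset.sum_const, Nat.card_Icc]
            have : 2*D+r+1-r = 2*D+1 := by omega
            rw [this, nsmul_eq_mul]
    have hcount : ((2*D+1 : ℕ) : ℝ) * (4^r * p^(r+1) * (1-p)^(r-1))
        ≤ (2*(T*(r+1))+2*r+1) * (4^r * p^(r+1) * (1-p)^(r-1)) := by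
      apply mul_le_mul_of_nonneg_right _ hWpos
      rw [hD]
      push_cast
      have : (0:ℝ) ≤ (r:ℝ) := by positivity
      linarith
    linarith [hBL, hBR, hWsum, hcount]

lemma bern (x : ℝ) (hx0 : 0 ≤ x) (hx1 : x ≤ 1) (T : ℕ) : (1-x)^T ≤ 1/(1 + (T:ℝ)*x) := by
  have hpos : 0 < 1 + (T:ℝ)*x := by positivity
  rw [le_div_iff₀ hpos]
  calc (1-x)^T * (1+(T:ℝ)*x) ≤ (1-x)^T * (1+x)^T := by
        apply mul_le_mul_of_nonneg_left (one_add_mul_le_pow (by linarith) T)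
          (pow_nonneg (by linarith) _)
    _ = ((1-x)*(1+x))^T := (mul_pow _ _ _).symm
    _ = (1-x^2)^T := by ring_nf
    _ ≤ 1 := pow_le_one₀ (by nlinarith) (by nlinarith)

set_option maxHeartbeats 1000000 in
/-- For all `0 < p < 1/4` there exists `r_0 = r_0(p)` such that for all `r ≥ r_0`
and `n > 2r+1`, `E_p[X_0(n,r)] < 1/4`. -/
theorem upper_bound_expectation (p : ℝ) (hp : 0 < p) (hp4 : p < 1 / 4) :
    ∃ r0 : ℕ, 0 < r0 ∧ ∀ r : ℕ, r0 ≤ r → ∀ n : ℕ, 2 * r + 1 < n → Ex r p n < 1 / 4 := by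
  have hp1 : p < 1 := by linarith
  obtain ⟨ε, hε⟩ : ∃ ε : ℝ, ε = 1/4 - p := ⟨_, rfl⟩
  have hε0 : 0 < ε := by rw [hε]; linarith
  have hε14 : ε ≤ 1 := by rw [hε]; linarith
  have h4p : ‖4*p‖ < 1 := by rw [Real.norm_eq_abs, abs_of_pos (by linarith)]; linarith
  have hsum : Summable (fun r : ℕ => (r:ℝ)^1 * (4*p)^r) :=
    summable_pow_mul_geometric_of_norm_lt_one 1 h4p
  have htend0 : Filter.Tendsto (fun r : ℕ => (r:ℝ) * (4*p)^r) Filter.atTop (nhds 0) := by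
    have := hsum.tendsto_atTop_zero
    simpa using this
  have htendgeo : Filter.Tendsto (fun r : ℕ => (4*p)^r) Filter.atTop (nhds 0) :=
    tendsto_pow_atTop_nhds_zero_of_norm_lt_one h4p
  obtain ⟨C1, hC1⟩ : ∃ C1 : ℝ, C1 = 36*p/(ε*(1-p)^2) := ⟨_, rfl⟩
  have hC10 : 0 < C1 := by
    rw [hC1]
    exact div_pos (by linarith) (mul_pos hε0 (pow_pos (by linarith) 2))
  have htend : Filter.Tendsto (fun r : ℕ => C1 * ((r:ℝ) * (4*p)^r + (4*p)^r))
      Filter.atTop (nhds 0) := by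
    have h1 := htend0.add htendgeo
    have h2 := h1.const_mul C1
    simpa using h2
  have hev : ∀ᶠ r : ℕ in Filter.atTop, C1 * ((r:ℝ) * (4*p)^r + (4*p)^r) < ε/8 :=
    Filter.Tendsto.eventually_lt_const (by positivity : (0:ℝ) < ε/8) htend
  obtain ⟨R, hR⟩ := Filter.eventually_atTop.1 hev
  refine ⟨max R 1, by omega, ?_⟩
  intro r hrr n hn
  have hr1 : 1 ≤ r := le_trans (le_max_right R 1) hrr
  have hrR : R ≤ r := le_trans (le_max_left R 1) hrr
  have hn0 : n ≠ 0 := by omega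
  haveI : NeZero n := ⟨hn0⟩
  obtain ⟨q, hq⟩ : ∃ q : ℝ, q = (1-p)^(r+1) := ⟨_, rfl⟩
  have hq0 : 0 < q := by rw [hq]; exact pow_pos (by linarith) _
  have hq1 : q ≤ 1 := by rw [hq]; exact pow_le_one₀ (by linarith) (by linarith)
  obtain ⟨T, hT⟩ : ∃ T : ℕ, T = ⌈16/(ε*q)⌉₊ := ⟨_, rfl⟩
  have hT1 : 1 ≤ T := by
    rw [hT]; exact Nat.one_le_ceil_iff.2 (by positivity)
  have hTceil : 16/(ε*q) ≤ (T:ℝ) := by rw [hT]; exact Nat.le_ceil _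
  have hTub : (T:ℝ) < 16/(ε*q) + 1 := by rw [hT]; exact Nat.ceil_lt_add_one (by positivity)
  have hkey := key p hp hp4 r T n hr1 hT1 hn
  rw [← hq] at hkey
  -- middle term
  have hTq : 16/ε ≤ (T:ℝ)*q := by
    have h1 : (16/(ε*q))*q ≤ (T:ℝ)*q := mul_le_mul_of_nonneg_right hTceil hq0.le
    have h2 : (16/(ε*q))*q = 16/ε := by field_simp
    linarith
  have hTqpos : 0 < (T:ℝ)*q := by
    have : (0:ℝ) < 16/ε := by positivity
    linarith
  have hmid : (1-q)^T ≤ ε/16 := by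
    have hb := bern q hq0.le hq1 T
    have h1 : 1/(1+(T:ℝ)*q) ≤ 1/((T:ℝ)*q) :=
      one_div_le_one_div_of_le hTqpos (by linarith)
    have h2 : 1/((T:ℝ)*q) ≤ 1/(16/ε) := one_div_le_one_div_of_le (by positivity) hTq
    have h3 : 1/(16/ε) = ε/16 := by field_simp
    linarith
  -- third term
  have hWpos : (0:ℝ) ≤ 4^r * p^(r+1) * (1-p)^(r-1) :=
    mul_nonneg (mul_nonneg (by positivity) (by positivity)) (pow_nonneg (by linarith) _)
  have hthird : (2*((T:ℝ)*(r+1))+2*r+1) * (4^r * p^(r+1) * (1-p)^(r-1)) ≤ ε/8 := by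
    obtain ⟨d, hd⟩ : ∃ d : ℝ, d = 1/(ε*q) := ⟨_, rfl⟩
    have hεq0 : 0 < ε*q := mul_pos hε0 hq0
    have hd0 : 0 < d := by rw [hd]; positivity
    have hd1 : 1 ≤ d := by
      rw [hd, le_one_div (by norm_num) hεq0]
      nlinarith
    have hcoef : 2*((T:ℝ)*(r+1))+2*r+1 ≤ 36*d*(r+1) := by
      have h1 : (T:ℝ) ≤ 16*d + 1 := by
        rw [hd, mul_one_div]; linarith
      have hr0 : (0:ℝ) ≤ (r:ℝ) := by positivity
      nlinarith
    have hne : ((1:ℝ)-p) ≠ 0 := ne_of_gt (by linarith)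
    have hεne : ε ≠ 0 := ne_of_gt hε0
    have hqne : q ≠ 0 := ne_of_gt hq0
    have hWq : 4^r * p^(r+1) * (1-p)^(r-1) = q * (p*(4*p)^r/(1-p)^2) := by
      have hsplit : (1-p)^(r+1) = (1-p)^(r-1) * (1-p)^2 := by
        rw [← pow_add]; congr 1; omega
      rw [hq, hsplit, mul_pow]
      field_simp
      ring
    have hdq : d*q = 1/ε := by rw [hd]; field_simp
    calc (2*((T:ℝ)*(r+1))+2*r+1) * (4^r * p^(r+1) * (1-p)^(r-1))
        ≤ (36*d*(r+1)) * (4^r * p^(r+1) * (1-p)^(r-1)) :=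
          mul_le_mul_of_nonneg_right hcoef hWpos
      _ = C1 * ((r:ℝ) * (4*p)^r + (4*p)^r) := by
          have hrw : (r:ℝ)*(4*p)^r + (4*p)^r = ((r:ℝ)+1) * (4*p)^r := by ring
          rw [hrw, hWq, hC1]
          calc (36*d*((r:ℝ)+1)) * (q * (p*(4*p)^r/(1-p)^2))
              = (d*q) * (36 * ((r:ℝ)+1) * (p*(4*p)^r/(1-p)^2)) := by ring
            _ = (1/ε) * (36 * ((r:ℝ)+1) * (p*(4*p)^r/(1-p)^2)) := by rw [hdq]
            _ = 36*p/(ε*(1-p)^2) * (((r:ℝ)+1) * (4*p)^r) := by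
                field_simp
      _ ≤ ε/8 := le_of_lt (hR r hrR)
  -- assemble
  unfold Ex
  rw [dif_neg hn0]
  have hfin : p + 2*(1-q)^T + (2*((T:ℝ)*(r+1))+2*r+1) * (4^r * p^(r+1) * (1-p)^(r-1)) < 1/4 := by
    have : p + ε/8 + ε/8 < 1/4 := by rw [hε]; linarith
    linarith [hmid, hthird]
  exact lt_of_le_of_lt hkey hfin
end
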